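/- arXiv:2103.04695 — 6 statements merged into one kernel-verified Lean document; each statement's English description precedes it below -/
import Mathlib

section
/- Let (X, h) be an essentially minimal zero-dimensional system, let Y be its unique minimal set, let y ∈ Y, and let U be a compact open neighborhood of y. Then: (a) ⋃_{j ∈ ℤ} h^j(U) = X; (b) the range of λ_U is a finite subset of ℤ_{>0} (in particular λ_U never takes the value ∞); (c) U = { h^{λ_U(x)}(x) : x ∈ U }; (d) ⋃_{j ∈ ℤ_{>0}} h^j(U) = ⋃_{j ∈ ℤ_{<0}} h^j(U) = X. -/
open Set Topology

variable {X : Type*}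

/-- The first return time map `λ_U` of a subset `U` under the homeomorphism `h`:
`λ_U x = inf { n ∈ ℤ_{>0} | h^n x ∈ U }`, with value `∞` (i.e. `⊤ : ℕ∞`) when no
such `n` exists. -/
noncomputable def firstReturnTime [TopologicalSpace X] (h : X ≃ₜ X) (U : Set X) (x : X) : ℕ∞ :=
  sInf ((fun n : ℕ => (n : ℕ∞)) '' {n : ℕ | 0 < n ∧ (⇑h)^[n] x ∈ U})

/-- A partition of `X`: a finite collection of mutually disjoint compact open subsets
whose union is `X`. -/
def IsPartition [TopologicalSpace X] (P : Set (Set X)) : Prop :=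
  P.Finite ∧ (∀ U ∈ P, IsCompact U) ∧ (∀ U ∈ P, IsOpen U) ∧
    P.PairwiseDisjoint id ∧ ⋃₀ P = Set.univ

/-- `P'` is finer than `P`: every element of `P'` is contained in an element of `P`. -/
def Finer (P' P : Set (Set X)) : Prop :=
  ∀ U ∈ P', ∃ V ∈ P, U ⊆ V

/-- The data of a system of finite first return time maps:
`T` bases `base t`, numbers `K t`, pieces `Y t k ⊆ base t` and return times `J t k`. -/
structure ReturnSystem (X : Type*) where
  T : ℕ
  base : Fin T → Set X
  K : Fin T → ℕ
  Y : (t : Fin T) → Fin (K t) → Set X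
  J : (t : Fin T) → Fin (K t) → ℕ

/-- `S` is a system of finite first return time maps (for the homeomorphism `h`)
subordinate to `P`. -/
structure IsReturnSystem [TopologicalSpace X] (h : X ≃ₜ X) (P : Set (Set X))
    (S : ReturnSystem X) : Prop where
  T_pos : 0 < S.T
  base_isCompact : ∀ t, IsCompact (S.base t)
  base_isOpen : ∀ t, IsOpen (S.base t)
  base_subset : ∀ t, ∃ U ∈ P, S.base t ⊆ U
  K_pos : ∀ t, 0 < S.K t
  Y_isCompact : ∀ t k, IsCompact (S.Y t k)
  Y_isOpen : ∀ t k, IsOpen (S.Y t k)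
  Y_disjoint : ∀ t, ∀ k k', k ≠ k' → Disjoint (S.Y t k) (S.Y t k')
  Y_iUnion : ∀ t, (⋃ k, S.Y t k) = S.base t
  J_pos : ∀ t k, 0 < S.J t k
  returnTime : ∀ t k, ∀ x ∈ S.Y t k, firstReturnTime h (S.base t) x = (S.J t k : ℕ∞)
  image_disjoint : ∀ t, ∀ k k', k ≠ k' →
    Disjoint ((⇑h)^[S.J t k] '' S.Y t k) ((⇑h)^[S.J t k'] '' S.Y t k')
  image_iUnion : ∀ t, (⋃ k, (⇑h)^[S.J t k] '' S.Y t k) = S.base t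
  tower : ∀ x : X, ∃! p : Σ t : Fin S.T, Fin (S.K t) × ℕ,
    p.2.2 < S.J p.1 p.2.1 ∧ x ∈ (⇑h)^[p.2.2] '' S.Y p.1 p.2.1

/-- The partition `P₁(S) = { h^j (Y t k) | 0 ≤ j ≤ J t k - 1 }`. -/
def ReturnSystem.partOne [TopologicalSpace X] (h : X ≃ₜ X) (S : ReturnSystem X) :
    Set (Set X) :=
  {V | ∃ (t : Fin S.T) (k : Fin (S.K t)) (j : ℕ), j < S.J t k ∧ V = (⇑h)^[j] '' S.Y t k}

/-- The partition `P₂(S) = { h^j (Y t k) | 1 ≤ j ≤ J t k }`. -/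
def ReturnSystem.partTwo [TopologicalSpace X] (h : X ≃ₜ X) (S : ReturnSystem X) :
    Set (Set X) :=
  {V | ∃ (t : Fin S.T) (k : Fin (S.K t)) (j : ℕ),
    0 < j ∧ j ≤ S.J t k ∧ V = (⇑h)^[j] '' S.Y t k}

/-- `Y` is a minimal set for the system `(X, h)`: nonempty, closed, `h`-invariant, with no
nonempty proper closed `h`-invariant subset. -/
def IsMinimalSet [TopologicalSpace X] (h : X ≃ₜ X) (Y : Set X) : Prop :=
  Y.Nonempty ∧ IsClosed Y ∧ (⇑h) '' Y = Y ∧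
    ∀ Y' ⊆ Y, Y'.Nonempty → IsClosed Y' → (⇑h) '' Y' = Y' → Y' = Y

/-- `Y` is a minimal set of the subsystem of `(X, h)` on the (closed, invariant) subset `F`. -/
def IsMinimalSetWithin [TopologicalSpace X] (h : X ≃ₜ X) (F Y : Set X) : Prop :=
  Y ⊆ F ∧ IsMinimalSet h Y

/-- `(Z, ψ)` witnesses fiberwise essential minimality of `(X, h)`: `Z ⊆ X` is closed,
`ψ : X → Z` is a quotient map restricting to the identity on `Z` with `ψ ∘ h = ψ`, and each
fiber `ψ⁻¹(z)` is an essentially minimal subsystem whose (unique) minimal set contains `z`. -/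
structure IsFiberwiseWitness [TopologicalSpace X] (h : X ≃ₜ X) (Z : Set X)
    (ψ : X → Z) : Prop where
  closed : IsClosed Z
  quotient : IsQuotientMap ψ
  restrict_id : ∀ (x : X) (hx : x ∈ Z), ψ x = ⟨x, hx⟩
  comp_h : ∀ x, ψ (h x) = ψ x
  fiber : ∀ z : Z, ∃ Y : Set X, IsMinimalSetWithin h (ψ ⁻¹' {z}) Y ∧ (z : X) ∈ Y ∧
    ∀ Y', IsMinimalSetWithin h (ψ ⁻¹' {z}) Y' → Y' = Y

/-- `(X, h)` is fiberwise essentially minimal. -/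
def IsFiberwiseEssentiallyMinimal [TopologicalSpace X] (h : X ≃ₜ X) : Prop :=
  ∃ (Z : Set X) (ψ : X → Z), IsFiberwiseWitness h Z ψ


section FirstReturnHelpers

variable {X : Type*}

private lemma exists_minimalSet' [TopologicalSpace X] [CompactSpace X] [T2Space X] (g : X ≃ₜ X)
    (D : Set X) (hne : D.Nonempty) (hcl : IsClosed D) (hinv : ⇑g '' D = D) :
    ∃ Y', Y' ⊆ D ∧ IsMinimalSet g Y' := by
  set S : Set (Set X) := {E | E ⊆ D ∧ E.Nonempty ∧ IsClosed E ∧ ⇑g '' E = E} with hS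
  have hchain : ∀ c ⊆ S, IsChain (· ⊆ ·) c → c.Nonempty →
      ∃ lb ∈ S, ∀ s ∈ c, lb ⊆ s := by
    rintro c hcS hchain ⟨E₀, hE₀⟩
    haveI : Nonempty c := ⟨⟨E₀, hE₀⟩⟩
    have hdir : Directed (· ⊇ ·) (fun E : c => (E : Set X)) := by
      intro a b
      rcases hchain.total a.2 b.2 with hab | hba
      · exact ⟨a, Subset.rfl, hab⟩
      · exact ⟨b, hba, Subset.rfl⟩
    have hnei : (⋂ E : c, (E : Set X)).Nonempty :=
      IsCompact.nonempty_iInter_of_directed_nonempty_isCompact_isClosed _ hdir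
        (fun E => (hcS E.2).2.1) (fun E => (hcS E.2).2.2.1.isCompact)
        (fun E => (hcS E.2).2.2.1)
    refine ⟨⋂ E : c, (E : Set X), ⟨?_, hnei, isClosed_iInter fun E => (hcS E.2).2.2.1, ?_⟩,
      fun s hs => iInter_subset (fun E : c => (E : Set X)) ⟨s, hs⟩⟩
    · exact (iInter_subset _ ⟨E₀, hE₀⟩).trans (hcS hE₀).1
    · rw [image_iInter g.bijective]
      exact iInter_congr fun E => (hcS E.2).2.2.2
  obtain ⟨m, hmD, hmin⟩ := zorn_superset_nonempty S hchain D ⟨Subset.rfl, hne, hcl, hinv⟩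
  refine ⟨m, hmin.1.1, hmin.1.2.1, hmin.1.2.2.1, hmin.1.2.2.2,
    fun Y'' hsub hne'' hcl'' hinv'' => ?_⟩
  exact subset_antisymm hsub (hmin.2 ⟨hsub.trans hmin.1.1, hne'', hcl'', hinv''⟩ hsub)

private lemma minimalSet_subset_of_fwd [TopologicalSpace X] [CompactSpace X] [T2Space X]
    (g : X ≃ₜ X) (Y : Set X) (hYuniq : ∀ Y', IsMinimalSet g Y' → Y' = Y)
    (C : Set X) (hne : C.Nonempty) (hcl : IsClosed C) (hfwd : ⇑g '' C ⊆ C) : Y ⊆ C := by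
  have hiter : ∀ n : ℕ, (⇑g)^[n + 1] '' C ⊆ (⇑g)^[n] '' C := by
    intro n
    rw [Function.iterate_succ, Set.image_comp]
    exact Set.image_mono hfwd
  have hanti : Antitone (fun n : ℕ => (⇑g)^[n] '' C) :=
    antitone_nat_of_succ_le hiter
  have hcomp : ∀ n : ℕ, IsCompact ((⇑g)^[n] '' C) :=
    fun n => (hcl.isCompact.image (g.continuous.iterate n))
  set D := ⋂ n : ℕ, (⇑g)^[n] '' C with hD
  have hDne : D.Nonempty :=
    IsCompact.nonempty_iInter_of_directed_nonempty_isCompact_isClosed _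
      hanti.directed_ge (fun n => hne.image _) hcomp (fun n => (hcomp n).isClosed)
  have hDcl : IsClosed D := isClosed_iInter fun n => (hcomp n).isClosed
  have hDsub : D ⊆ C := by
    have := iInter_subset (fun n : ℕ => (⇑g)^[n] '' C) 0
    simpa using this
  have hDinv : ⇑g '' D = D := by
    rw [hD, image_iInter g.bijective]
    apply subset_antisymm
    · refine subset_iInter fun n => ?_
      refine (iInter_subset _ n).trans ?_
      rw [← Set.image_comp, ← Function.iterate_succ']
      exact hiter n
    · refine subset_iInter fun n => ?_
      refine (iInter_subset _ (n + 1)).trans ?_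
      rw [← Set.image_comp, ← Function.iterate_succ']
  obtain ⟨Y', hY'D, hY'min⟩ := exists_minimalSet' g D hDne hDcl hDinv
  rw [← hYuniq Y' hY'min]
  exact hY'D.trans hDsub

private lemma returns' [TopologicalSpace X] [CompactSpace X] [T2Space X] (g : X ≃ₜ X)
    (Y : Set X) (hY : IsMinimalSet g Y) (hYuniq : ∀ Y', IsMinimalSet g Y' → Y' = Y)
    (y : X) (hyY : y ∈ Y) (U : Set X) (hUo : IsOpen U) (hyU : y ∈ U) :
    ∀ x : X, ∃ n : ℕ, 0 < n ∧ (⇑g)^[n] x ∈ U := by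
  by_contra hcon
  push_neg at hcon
  obtain ⟨x₀, hx₀⟩ := hcon
  set W := ⋃ n : ℕ, (⇑g)^[n + 1] ⁻¹' U with hW
  have hWo : IsOpen W := isOpen_iUnion fun n => hUo.preimage (g.continuous.iterate _)
  have hx₀W : x₀ ∉ W := by
    simp only [hW, mem_iUnion, mem_preimage]
    rintro ⟨n, hn⟩
    exact hx₀ (n + 1) n.succ_pos hn
  have hfwd : ⇑g '' Wᶜ ⊆ Wᶜ := by
    rintro _ ⟨z, hz, rfl⟩
    simp only [mem_compl_iff, hW, mem_iUnion, mem_preimage] at hz ⊢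
    rintro ⟨n, hn⟩
    exact hz ⟨n + 1, by rwa [Function.iterate_succ_apply]⟩
  have hYsub : Y ⊆ Wᶜ :=
    minimalSet_subset_of_fwd g Y hYuniq Wᶜ ⟨x₀, hx₀W⟩ hWo.isClosed_compl hfwd
  obtain ⟨z, hzY, hzy⟩ : ∃ z ∈ Y, g z = y := by
    have := hY.2.2.1
    rw [← this] at hyY
    obtain ⟨z, hz, rfl⟩ := hyY
    exact ⟨z, hz, rfl⟩
  have hzW : z ∉ W := hYsub hzY
  apply hzW
  simp only [hW, mem_iUnion, mem_preimage]
  exact ⟨0, by simpa [hzy] using hyU⟩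

private lemma isMinimalSet_symm' [TopologicalSpace X] (g : X ≃ₜ X) (Y : Set X)
    (hY : IsMinimalSet g Y) : IsMinimalSet g.symm Y := by
  obtain ⟨hne, hcl, hinv, hmin⟩ := hY
  have hsymm : ∀ A : Set X, ⇑g '' A = A → ⇑g.symm '' A = A := by
    intro A hA
    conv_lhs => rw [← hA]
    ext w; simp [Set.image_image]
  refine ⟨hne, hcl, hsymm Y hinv, fun Y' hsub hne' hcl' hinv' => ?_⟩
  refine hmin Y' hsub hne' hcl' ?_
  conv_lhs => rw [← hinv']
  ext w; simp [Set.image_image]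

private lemma firstReturnTime_eq_sInf [TopologicalSpace X] (h : X ≃ₜ X) (U : Set X) (x : X)
    (hne : {n : ℕ | 0 < n ∧ (⇑h)^[n] x ∈ U}.Nonempty) :
    firstReturnTime h U x = ((sInf {n : ℕ | 0 < n ∧ (⇑h)^[n] x ∈ U} : ℕ) : ℕ∞) := by
  unfold firstReturnTime
  apply le_antisymm
  · exact sInf_le ⟨_, Nat.sInf_mem hne, rfl⟩
  · refine le_sInf ?_
    rintro b ⟨m, hm, rfl⟩
    exact Nat.mono_cast (Nat.sInf_le hm)

end FirstReturnHelpers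

/-- Theorem (Statement 2): properties of first return times for essentially minimal
zero-dimensional systems. -/
theorem essentiallyMinimal_firstReturnTime_properties
    {X : Type*} [TopologicalSpace X] [CompactSpace X]
    [TopologicalSpace.MetrizableSpace X] [TotallyDisconnectedSpace X] (h : X ≃ₜ X)
    (Y : Set X) (hY : IsMinimalSet h Y) (hYuniq : ∀ Y', IsMinimalSet h Y' → Y' = Y)
    (y : X) (hyY : y ∈ Y) (U : Set X) (hUc : IsCompact U) (hUo : IsOpen U) (hyU : y ∈ U) :
    (⋃ j : ℤ, ⇑(h.toEquiv ^ j) '' U) = Set.univ ∧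
      ((Set.range fun x : U => firstReturnTime h U (x : X)).Finite ∧
        ∀ x ∈ U, firstReturnTime h U x ≠ ⊤) ∧
      U = {w | ∃ x ∈ U, ∃ m : ℕ, firstReturnTime h U x = (m : ℕ∞) ∧ w = (⇑h)^[m] x} ∧
      (⋃ n : ℕ, (⇑h)^[n + 1] '' U) = Set.univ ∧
      (⋃ n : ℕ, (⇑h.symm)^[n + 1] '' U) = Set.univ := by
  haveI : T2Space X := inferInstance
  have hYsymm : IsMinimalSet h.symm Y := isMinimalSet_symm' h Y hY
  have hYuniq' : ∀ Y', IsMinimalSet h.symm Y' → Y' = Y := by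
    intro Y' hY'
    have h2 := isMinimalSet_symm' h.symm Y' hY'
    rw [Homeomorph.symm_symm] at h2
    exact hYuniq Y' h2
  have keyF : ∀ x : X, ∃ n, 0 < n ∧ (⇑h)^[n] x ∈ U :=
    returns' h Y hY hYuniq y hyY U hUo hyU
  have keyB : ∀ x : X, ∃ n, 0 < n ∧ (⇑h.symm)^[n] x ∈ U :=
    returns' h.symm Y hYsymm hYuniq' y hyY U hUo hyU
  have hSne : ∀ x : X, {n : ℕ | 0 < n ∧ (⇑h)^[n] x ∈ U}.Nonempty := by
    intro x
    obtain ⟨n, hn, hmem⟩ := keyF x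
    exact ⟨n, hn, hmem⟩
  have hfrt : ∀ x : X, firstReturnTime h U x
      = ((sInf {n : ℕ | 0 < n ∧ (⇑h)^[n] x ∈ U} : ℕ) : ℕ∞) :=
    fun x => firstReturnTime_eq_sInf h U x (hSne x)
  -- (d) forward union
  have d1 : (⋃ n : ℕ, (⇑h)^[n + 1] '' U) = Set.univ := by
    ext x
    simp only [mem_iUnion, mem_univ, iff_true]
    obtain ⟨n, hn, hmem⟩ := keyB x
    obtain ⟨k, rfl⟩ := Nat.exists_eq_succ_of_ne_zero hn.ne'
    exact ⟨k, (⇑h.symm)^[k + 1] x, hmem,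
      Function.LeftInverse.iterate h.apply_symm_apply (k + 1) x⟩
  have d2 : (⋃ n : ℕ, (⇑h.symm)^[n + 1] '' U) = Set.univ := by
    ext x
    simp only [mem_iUnion, mem_univ, iff_true]
    obtain ⟨n, hn, hmem⟩ := keyF x
    obtain ⟨k, rfl⟩ := Nat.exists_eq_succ_of_ne_zero hn.ne'
    exact ⟨k, (⇑h)^[k + 1] x, hmem,
      Function.LeftInverse.iterate h.symm_apply_apply (k + 1) x⟩
  refine ⟨?_, ⟨?_, ?_⟩, ?_, d1, d2⟩
  -- (a)
  · ext x
    simp only [mem_iUnion, mem_univ, iff_true]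
    have hx : x ∈ ⋃ n : ℕ, (⇑h)^[n + 1] '' U := d1 ▸ mem_univ x
    obtain ⟨n, w, hw, hwx⟩ := by simpa only [mem_iUnion] using hx
    refine ⟨((n : ℤ) + 1), w, hw, ?_⟩
    have : ⇑(h.toEquiv ^ ((n : ℤ) + 1)) = (⇑h)^[n + 1] := by
      rw [show ((n : ℤ) + 1) = ((n + 1 : ℕ) : ℤ) by push_cast; ring,
        zpow_natCast, ← Equiv.Perm.iterate_eq_pow]
      rfl
    rw [this]
    exact hwx
  -- (b) finiteness of the range
  · obtain ⟨t, ht⟩ := hUc.elim_finite_subcover (fun n : ℕ => (⇑h)^[n + 1] ⁻¹' U)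
      (fun n => hUo.preimage (h.continuous.iterate _)) (fun x _ => by
        obtain ⟨n, hn, hmem⟩ := keyF x
        obtain ⟨k, rfl⟩ := Nat.exists_eq_succ_of_ne_zero hn.ne'
        exact mem_iUnion.2 ⟨k, hmem⟩)
    set N := t.sup id + 1 with hN
    refine Set.Finite.subset ((Set.finite_Iic N).image (fun n : ℕ => (n : ℕ∞))) ?_
    rintro _ ⟨x, rfl⟩
    refine ⟨sInf {n : ℕ | 0 < n ∧ (⇑h)^[n] (x : X) ∈ U}, ?_, (hfrt x).symm⟩
    obtain ⟨n, hnt, hnmem⟩ := by simpa only [mem_iUnion, mem_preimage] using ht x.2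
    have h1 : sInf {n : ℕ | 0 < n ∧ (⇑h)^[n] (x : X) ∈ U} ≤ n + 1 :=
      Nat.sInf_le ⟨n.succ_pos, hnmem⟩
    have h2 : n ≤ t.sup id := Finset.le_sup (f := id) hnt
    simp only [mem_Iic, hN]
    omega
  -- (b) never ⊤
  · intro x _
    rw [hfrt x]
    exact ENat.coe_ne_top _
  -- (c)
  · ext w
    constructor
    · intro hw
      set B := {n : ℕ | 0 < n ∧ (⇑h.symm)^[n] w ∈ U} with hB
      have hBne : B.Nonempty := by
        obtain ⟨n, hn, hmem⟩ := keyB w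
        exact ⟨n, hn, hmem⟩
      set n₀ := sInf B with hn₀
      obtain ⟨hn₀pos, hn₀mem⟩ : n₀ ∈ B := Nat.sInf_mem hBne
      set x := (⇑h.symm)^[n₀] w with hx
      have hxw : (⇑h)^[n₀] x = w := Function.LeftInverse.iterate h.apply_symm_apply n₀ w
      have hn₀S : n₀ ∈ {n : ℕ | 0 < n ∧ (⇑h)^[n] x ∈ U} := ⟨hn₀pos, by rw [hxw]; exact hw⟩
      have hsInfeq : sInf {n : ℕ | 0 < n ∧ (⇑h)^[n] x ∈ U} = n₀ := by
        refine le_antisymm (Nat.sInf_le hn₀S) ?_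
        obtain ⟨hmpos, hmmem⟩ := Nat.sInf_mem (⟨n₀, hn₀S⟩ :
          {n : ℕ | 0 < n ∧ (⇑h)^[n] x ∈ U}.Nonempty)
        set m := sInf {n : ℕ | 0 < n ∧ (⇑h)^[n] x ∈ U} with hm
        by_contra hlt
        push_neg at hlt
        have hmn : m < n₀ := lt_of_le_of_lt (le_refl m) hlt
        have hsplit : (⇑h)^[m] x = (⇑h.symm)^[n₀ - m] w := by
          have e : n₀ = m + (n₀ - m) := by omega
          rw [hx]
          conv_lhs => rw [e]
          rw [Function.iterate_add_apply]
          exact Function.LeftInverse.iterate h.apply_symm_apply m _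
        have : n₀ - m ∈ B := ⟨by omega, by rw [← hsplit]; exact hmmem⟩
        have := Nat.sInf_le this
        omega
      refine ⟨x, hn₀mem, n₀, ?_, hxw.symm⟩
      rw [hfrt x, hsInfeq]
    · rintro ⟨x, hxU, m, hfrtm, rfl⟩
      rw [hfrt x] at hfrtm
      have : sInf {n : ℕ | 0 < n ∧ (⇑h)^[n] x ∈ U} = m := by exact_mod_cast hfrtm
      have hmem := Nat.sInf_mem (hSne x)
      rw [this] at hmem
      exact hmem.2
end

section
/- Let (X, h) be a zero-dimensional system, let P be a partition of X, and let S = (T, (X_t), (K_t), (Y_{t,k}), (J_{t,k})) and S' = (T', (X'_t), (K'_t), (Y'_{t,k}), (J'_{t,k})) be systems of finite first return time maps subordinate to P such that ⊔_{t=1}^T X_t = ⊔_{t=1}^{T'} X'_t. Then P_1(S') is finer than P_1(S) if and only if for each s ∈ {1, …, T'} and each l ∈ {1, …, K'_s} there exist t ∈ {1, …, T} and k ∈ {1, …, K_t} such that Y'_{s,l} ⊆ Y_{t,k}. -/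
open Set Topology

variable {X : Type*}

/-- Auxiliary: points strictly inside a tower (level `0 < j < J t k`) are not in any base. -/
lemma ReturnSystem.notin_base [TopologicalSpace X] {h : X ≃ₜ X} {P : Set (Set X)}
    {S : ReturnSystem X} (hS : IsReturnSystem h P S) {t : Fin S.T} {k : Fin (S.K t)}
    {x : X} (hx : x ∈ S.Y t k) {j : ℕ} (hj : 0 < j) (hjJ : j < S.J t k) :
    (⇑h)^[j] x ∉ ⋃ t', S.base t' := by
  intro hmem
  obtain ⟨t'', hmem⟩ := Set.mem_iUnion.mp hmem
  rw [← hS.Y_iUnion t''] at hmem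
  obtain ⟨k'', hk''⟩ := Set.mem_iUnion.mp hmem
  obtain ⟨p, hp, hup⟩ := hS.tower ((⇑h)^[j] x)
  have h1 := hup ⟨t, k, j⟩ ⟨hjJ, ⟨x, hx, rfl⟩⟩
  have h2 := hup ⟨t'', k'', 0⟩ ⟨hS.J_pos _ _, by simpa using hk''⟩
  have h3 := congrArg (fun p : (Σ t : Fin S.T, Fin (S.K t) × ℕ) => p.2.2) (h1.trans h2.symm)
  simp only at h3
  omega

/-- Theorem (Statement 5): for two systems with the same union of bases, `P₁(S')` is finer
than `P₁(S)` iff every `Y'_{s,l}` is contained in some `Y_{t,k}`. -/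
theorem partOne_finer_iff_pieces_contained
    {X : Type*} [TopologicalSpace X] [CompactSpace X]
    [TopologicalSpace.MetrizableSpace X] [TotallyDisconnectedSpace X] (h : X ≃ₜ X)
    (P : Set (Set X)) (hP : IsPartition P)
    (S S' : ReturnSystem X) (hS : IsReturnSystem h P S) (hS' : IsReturnSystem h P S')
    (hbases : (⋃ t, S.base t) = ⋃ t, S'.base t) :
    Finer (S'.partOne h) (S.partOne h) ↔
      ∀ (s : Fin S'.T) (l : Fin (S'.K s)),
        ∃ (t : Fin S.T) (k : Fin (S.K t)), S'.Y s l ⊆ S.Y t k := by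
  -- some element of P₁(S), used for the empty cases
  have hTdef : ∃ (t : Fin S.T) (k : Fin (S.K t)), True := by
    exact ⟨⟨0, hS.T_pos⟩, ⟨0, hS.K_pos _⟩, trivial⟩
  obtain ⟨t₀, k₀, -⟩ := hTdef
  constructor
  · intro hfiner s l
    rcases Set.eq_empty_or_nonempty (S'.Y s l) with hem | ⟨x, hx⟩
    · exact ⟨t₀, k₀, by simp [hem]⟩
    · obtain ⟨V, hV, hsub⟩ := hfiner ((⇑h)^[0] '' S'.Y s l)
        ⟨s, l, 0, hS'.J_pos s l, rfl⟩
      obtain ⟨t, k, j, hjJ, rfl⟩ := hV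
      have hxV : x ∈ (⇑h)^[j] '' S.Y t k := hsub (by simpa using hx)
      -- x lies in some base of S
      have hxW : x ∈ ⋃ t', S.base t' := by
        rw [hbases]
        refine Set.mem_iUnion.mpr ⟨s, ?_⟩
        rw [← hS'.Y_iUnion s]
        exact Set.mem_iUnion.mpr ⟨l, hx⟩
      obtain ⟨t'', hmem⟩ := Set.mem_iUnion.mp hxW
      rw [← hS.Y_iUnion t''] at hmem
      obtain ⟨k'', hk''⟩ := Set.mem_iUnion.mp hmem
      obtain ⟨p, hp, hup⟩ := hS.tower x
      have h1 := hup ⟨t, k, j⟩ ⟨hjJ, hxV⟩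
      have h2 := hup ⟨t'', k'', 0⟩ ⟨hS.J_pos _ _, by simpa using hk''⟩
      have h3 := (h1.trans h2.symm)
      have hj0 : j = 0 := congrArg (fun p : (Σ t : Fin S.T, Fin (S.K t) × ℕ) => p.2.2) h3
      subst hj0
      exact ⟨t, k, by simpa using hsub⟩
  · intro hcont V hV
    obtain ⟨s, l, j, hj, rfl⟩ := hV
    obtain ⟨t, k, hsub⟩ := hcont s l
    rcases Set.eq_empty_or_nonempty (S'.Y s l) with hem | ⟨x, hx⟩
    · exact ⟨(⇑h)^[0] '' S.Y t₀ k₀, ⟨t₀, k₀, 0, hS.J_pos _ _, rfl⟩, by simp [hem]⟩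
    · have hxY : x ∈ S.Y t k := hsub hx
      -- J'_{s,l} ≤ J_{t,k}
      have hle : S'.J s l ≤ S.J t k := by
        by_contra hlt
        push_neg at hlt
        have hJmem : (⇑h)^[S.J t k] x ∈ ⋃ t', S'.base t' := by
          rw [← hbases]
          refine Set.mem_iUnion.mpr ⟨t, ?_⟩
          rw [← hS.image_iUnion t]
          exact Set.mem_iUnion.mpr ⟨k, ⟨x, hxY, rfl⟩⟩
        exact ReturnSystem.notin_base hS' hx (hS.J_pos t k) hlt hJmem
      exact ⟨(⇑h)^[j] '' S.Y t k, ⟨t, k, j, lt_of_lt_of_le hj hle, rfl⟩,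
        Set.image_mono hsub⟩
end

section
/- Let (X, h) be a zero-dimensional system such that for every partition R of X there exists a system of finite first return time maps subordinate to R. Then (X, h) has no periodic points if and only if for every partition P of X and every N ∈ ℤ_{>0} there exists a system S = (T, (X_t), (K_t), (Y_{t,k}), (J_{t,k})) of finite first return time maps subordinate to P such that J_{t,k} ≥ N for all t ∈ {1, …, T} and all k ∈ {1, …, K_t}. -/
open Set Topology

variable {X : Type*}

section Aux

variable {X : Type*}

lemma myIterate_eq_zpow [TopologicalSpace X] (h : X ≃ₜ X) (n : ℕ) (x : X) :
    (⇑h)^[n] x = (h.toEquiv ^ (n : ℤ)) x := by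
  rw [zpow_natCast]
  exact congrFun (Equiv.Perm.iterate_eq_pow h.toEquiv n) x

/-- Disjointification of a sequence of sets. -/
def myD (f : ℕ → Set X) (i : ℕ) : Set X := f i \ ⋃ j < i, f j

lemma myD_subset (f : ℕ → Set X) (i : ℕ) : myD f i ⊆ f i := diff_subset

lemma myD_disjoint (f : ℕ → Set X) {i j : ℕ} (hij : i ≠ j) :
    Disjoint (myD f i) (myD f j) := by
  wlog hlt : i < j generalizing i j
  · exact (this hij.symm (by omega)).symm
  refine Set.disjoint_left.2 fun x hxi hxj => ?_
  exact hxj.2 (mem_biUnion hlt hxi.1)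

lemma exists_mem_myD (f : ℕ → Set X) {x : X} (hx : ∃ i, x ∈ f i) :
    ∃ i, x ∈ myD f i := by
  classical
  refine ⟨Nat.find hx, Nat.find_spec hx, ?_⟩
  simp only [mem_iUnion]
  rintro ⟨j, hj, hxj⟩
  exact Nat.find_min hx hj hxj

lemma myD_isClopen [TopologicalSpace X] {f : ℕ → Set X} (hf : ∀ i, IsClopen (f i)) (i : ℕ) :
    IsClopen (myD f i) := by
  have : (⋃ j < i, f j) = ⋃ j ∈ Finset.range i, f j := by
    simp [Finset.mem_range]
  rw [myD, this]
  exact (hf i).diff (isClopen_biUnion_finset fun j _ => hf j)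

end Aux

/-- Theorem (Statement 7): a zero-dimensional system admitting systems of finite first
return time maps subordinate to every partition has no periodic points iff for every
partition and every `N` there is a subordinate system all of whose return times are `≥ N`. -/
theorem no_periodic_points_iff_return_times_ge
    {X : Type*} [TopologicalSpace X] [CompactSpace X]
    [TopologicalSpace.MetrizableSpace X] [TotallyDisconnectedSpace X] (h : X ≃ₜ X)
    (hadm : ∀ R : Set (Set X), IsPartition R → ∃ S : ReturnSystem X, IsReturnSystem h R S) :
    (∀ x : X, ∀ n : ℤ, n ≠ 0 → (h.toEquiv ^ n) x ≠ x) ↔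
      ∀ P : Set (Set X), IsPartition P → ∀ N : ℕ, 0 < N →
        ∃ S : ReturnSystem X, IsReturnSystem h P S ∧ ∀ t k, N ≤ S.J t k := by
  classical
  constructor
  · -- Forward direction
    intro hnp P hP N hN
    obtain ⟨hPfin, hPcpt, hPopen, hPdisj, hPunion⟩ := hP
    -- Step 1: for each x, a clopen neighborhood inside an element of P avoiding its
    -- first N-1 iterates.
    have key : ∀ x : X, ∃ V : Set X, IsClopen V ∧ x ∈ V ∧ (∃ U ∈ P, V ⊆ U) ∧
        ∀ y ∈ V, ∀ j, 0 < j → j < N → (⇑h)^[j] y ∉ V := by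
      intro x
      obtain ⟨U, hUP, hxU⟩ : ∃ U ∈ P, x ∈ U := by
        have : x ∈ ⋃₀ P := hPunion ▸ mem_univ x
        exact this
      -- per-j clopen sets
      have step : ∀ j : ℕ, ∃ W : Set X, IsClopen W ∧ x ∈ W ∧
          (0 < j → j < N → ∀ y ∈ W, (⇑h)^[j] y ∉ W) := by
        intro j
        by_cases hj : 0 < j ∧ j < N
        · have hne : (⇑h)^[j] x ≠ x := by
            intro e
            refine hnp x (j : ℤ) (by exact_mod_cast hj.1.ne') ?_
            rw [← myIterate_eq_zpow]; exact e
          obtain ⟨u, v, hu, hv, hju, hxv, huv⟩ := t2_separation hne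
          have hO : IsOpen (v ∩ (⇑h)^[j] ⁻¹' u) :=
            hv.inter ((h.continuous.iterate j).isOpen_preimage u hu)
          obtain ⟨W, hWc, hxW, hWO⟩ := compact_exists_isClopen_in_isOpen hO ⟨hxv, hju⟩
          refine ⟨W, hWc, hxW, fun _ _ y hyW hyW' => ?_⟩
          exact huv.le_bot ⟨(hWO hyW).2, (hWO hyW').1⟩
        · exact ⟨univ, isClopen_univ, mem_univ x, fun h1 h2 => absurd ⟨h1, h2⟩ hj⟩
      choose W hWc hxW hWQ using step
      obtain ⟨V₀, hV₀c, hxV₀, hV₀U⟩ := compact_exists_isClopen_in_isOpen (hPopen U hUP) hxU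
      refine ⟨V₀ ∩ ⋂ j ∈ Finset.range N, W j, ?_, ?_, ⟨U, hUP, fun y hy => hV₀U hy.1⟩, ?_⟩
      · exact hV₀c.inter (isClopen_biInter_finset fun j _ => hWc j)
      · exact ⟨hxV₀, mem_biInter fun j _ => hxW j⟩
      · intro y hy j hj1 hj2 hcon
        have hyW : y ∈ W j := mem_iInter₂.1 hy.2 j (Finset.mem_range.2 hj2)
        have hcW : (⇑h)^[j] y ∈ W j := mem_iInter₂.1 hcon.2 j (Finset.mem_range.2 hj2)
        exact hWQ j hj1 hj2 y hyW hcW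
    choose V hVclopen hxV hVsub hVQ using key
    -- Step 2: finite subcover
    obtain ⟨s, hs⟩ := isCompact_univ.elim_finite_subcover V (fun x => (hVclopen x).2)
      (fun x _ => mem_iUnion.2 ⟨x, hxV x⟩)
    set l : List X := s.toList with hl
    set f : ℕ → Set X := fun i => if hi : i < l.length then V (l.get ⟨i, hi⟩) else ∅ with hf
    have hfclopen : ∀ i, IsClopen (f i) := by
      intro i
      rw [hf]
      dsimp only
      split
      · exact hVclopen _
      · exact isClopen_empty
    have hfcover : ∀ x : X, ∃ i, x ∈ f i := by
      intro x
      obtain ⟨y, hy, hxy⟩ := mem_iUnion₂.1 (hs (mem_univ x))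
      obtain ⟨i, hget⟩ := List.mem_iff_get.1 (Finset.mem_toList.2 hy)
      refine ⟨i.1, ?_⟩
      rw [hf]; dsimp only; rw [dif_pos i.isLt]
      rw [show (⟨i.1, i.isLt⟩ : Fin l.length) = i from rfl, hget]
      exact hxy
    have hfsub : ∀ i, i < l.length → ∃ U ∈ P, f i ⊆ U := by
      intro i hi
      rw [hf]; dsimp only; rw [dif_pos hi]
      exact hVsub _
    have hfQ : ∀ i, ∀ y ∈ f i, ∀ j, 0 < j → j < N → (⇑h)^[j] y ∉ f i := by
      intro i y hy j hj1 hj2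
      by_cases hi : i < l.length
      · rw [hf] at hy ⊢; dsimp only at hy ⊢; rw [dif_pos hi] at hy ⊢
        exact hVQ _ y hy j hj1 hj2
      · rw [hf] at hy; dsimp only at hy; rw [dif_neg hi] at hy; exact absurd hy (notMem_empty y)
    -- Step 3: the refined partition R
    set R : Set (Set X) := myD f '' Set.Iio l.length with hR
    have hRpart : IsPartition R := by
      refine ⟨(Set.finite_Iio _).image _, ?_, ?_, ?_, ?_⟩
      · rintro _ ⟨i, -, rfl⟩
        exact (myD_isClopen hfclopen i).1.isCompact
      · rintro _ ⟨i, -, rfl⟩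
        exact (myD_isClopen hfclopen i).2
      · rintro _ ⟨i, -, rfl⟩ _ ⟨j, -, rfl⟩ hne
        exact myD_disjoint f (fun e => hne (by rw [e]))
      · refine eq_univ_of_forall fun x => ?_
        obtain ⟨i, hxi⟩ := exists_mem_myD f (hfcover x)
        have hilt : i < l.length := by
          by_contra hge
          have : f i = ∅ := by rw [hf]; dsimp only; rw [dif_neg hge]
          exact absurd (myD_subset f i hxi) (by rw [this]; exact notMem_empty x)
        exact ⟨myD f i, ⟨i, hilt, rfl⟩, hxi⟩
    obtain ⟨S, hS⟩ := hadm R hRpart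
    -- return times of nonempty pieces are ≥ N
    have hbound : ∀ t k, (S.Y t k).Nonempty → N ≤ S.J t k := by
      rintro t k ⟨y, hy⟩
      obtain ⟨U, hUR, hbU⟩ := hS.base_subset t
      obtain ⟨i, -, rfl⟩ := hUR
      have hyb : y ∈ S.base t := (hS.Y_iUnion t) ▸ mem_iUnion.2 ⟨k, hy⟩
      have him : (⇑h)^[S.J t k] y ∈ S.base t :=
        (hS.image_iUnion t) ▸ mem_iUnion.2 ⟨k, mem_image_of_mem _ hy⟩
      by_contra hlt
      exact hfQ i y (myD_subset f i (hbU hyb)) (S.J t k) (hS.J_pos t k)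
        (lt_of_not_ge hlt) (myD_subset f i (hbU him))
    -- the modified system
    refine ⟨⟨S.T, S.base, S.K, S.Y,
      fun t k => if (S.Y t k).Nonempty then S.J t k else N⟩, ?_, ?_⟩
    · refine ⟨hS.T_pos, hS.base_isCompact, hS.base_isOpen, ?_, hS.K_pos, hS.Y_isCompact,
        hS.Y_isOpen, hS.Y_disjoint, hS.Y_iUnion, ?_, ?_, ?_, ?_, ?_⟩
      · -- base_subset: R is finer than P
        intro t
        obtain ⟨U, hUR, hbU⟩ := hS.base_subset t
        obtain ⟨i, hi, rfl⟩ := hUR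
        obtain ⟨U', hU'P, hU'⟩ := hfsub i hi
        exact ⟨U', hU'P, fun y hy => hU' (myD_subset f i (hbU hy))⟩
      · intro t k
        dsimp only
        split
        · exact hS.J_pos t k
        · exact hN
      · intro t k x hx
        dsimp only
        rw [if_pos ⟨x, hx⟩]
        exact hS.returnTime t k x hx
      · intro t k k' hne
        dsimp only
        by_cases h1 : (S.Y t k).Nonempty
        · by_cases h2 : (S.Y t k').Nonempty
          · rw [if_pos h1, if_pos h2]
            exact hS.image_disjoint t k k' hne
          · rw [not_nonempty_iff_eq_empty.1 h2, image_empty]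
            exact disjoint_empty _
        · rw [not_nonempty_iff_eq_empty.1 h1, image_empty]
          exact empty_disjoint _
      · intro t
        dsimp only
        rw [← hS.image_iUnion t]
        refine iUnion_congr fun k => ?_
        by_cases h1 : (S.Y t k).Nonempty
        · rw [if_pos h1]
        · rw [not_nonempty_iff_eq_empty.1 h1, image_empty, image_empty]
      · intro x
        obtain ⟨p, hp, hu⟩ := hS.tower x
        have hiff : ∀ q : Σ t : Fin S.T, Fin (S.K t) × ℕ,
            ((q.2.2 < (if (S.Y q.1 q.2.1).Nonempty then S.J q.1 q.2.1 else N) ∧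
              x ∈ (⇑h)^[q.2.2] '' S.Y q.1 q.2.1) ↔
            (q.2.2 < S.J q.1 q.2.1 ∧ x ∈ (⇑h)^[q.2.2] '' S.Y q.1 q.2.1)) := by
          intro q
          constructor
          · rintro ⟨hlt, hmem⟩
            obtain ⟨y, hy, -⟩ := id hmem
            rw [if_pos ⟨y, hy⟩] at hlt
            exact ⟨hlt, hmem⟩
          · rintro ⟨hlt, hmem⟩
            obtain ⟨y, hy, -⟩ := id hmem
            rw [if_pos ⟨y, hy⟩]
            exact ⟨hlt, hmem⟩
        exact ⟨p, (hiff p).2 hp, fun q hq => hu q ((hiff q).1 hq)⟩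
    · intro t k
      dsimp only
      split
      · exact hbound t k ‹_›
      · exact le_refl N
  · -- Backward direction
    intro hrhs x n hn hfix
    set m := n.natAbs with hm
    have hmpos : 0 < m := Int.natAbs_pos.mpr hn
    have hxper : (⇑h)^[m] x = x := by
      rw [myIterate_eq_zpow]
      rcases Int.natAbs_eq n with he | he
      · rw [← he]; exact hfix
      · have h3 : (h.toEquiv ^ (m : ℤ))⁻¹ x = x := by
          rw [← zpow_neg, ← he]; exact hfix
        calc (h.toEquiv ^ (m : ℤ)) x
            = (h.toEquiv ^ (m : ℤ)) ((h.toEquiv ^ (m : ℤ))⁻¹ x) := by rw [h3]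
          _ = x := Equiv.apply_symm_apply _ x
    have hPuniv : IsPartition ({Set.univ} : Set (Set X)) := by
      refine ⟨finite_singleton _, ?_, ?_, pairwiseDisjoint_singleton _ _, sUnion_singleton _⟩
      · rintro U rfl; exact isCompact_univ
      · rintro U rfl; exact isOpen_univ
    obtain ⟨S, hS, hJ⟩ := hrhs {Set.univ} hPuniv (m + 1) (Nat.succ_pos m)
    obtain ⟨⟨t, k, j⟩, ⟨hjJ, y, hyY, hyx⟩, -⟩ := hS.tower x
    dsimp only at hjJ hyY hyx
    have hyper : (⇑h)^[m] y = y := by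
      have hinj : Function.Injective ((⇑h)^[j]) := h.injective.iterate j
      apply hinj
      rw [← Function.iterate_add_apply, Nat.add_comm, Function.iterate_add_apply, hyx, hxper]
    have hybase : y ∈ S.base t := (hS.Y_iUnion t) ▸ mem_iUnion.2 ⟨k, hyY⟩
    have hle : firstReturnTime h (S.base t) y ≤ (m : ℕ∞) :=
      sInf_le ⟨m, ⟨hmpos, by rw [hyper]; exact hybase⟩, rfl⟩
    rw [hS.returnTime t k y hyY] at hle
    have hmle : S.J t k ≤ m := by exact_mod_cast hle
    have := hJ t k
    omega
end

section
/- Let (X, h) be a zero-dimensional system, let P be a partition of X, let S = (T, (X_t), (K_t), (Y_{t,k}), (J_{t,k})) be a system of finite first return time maps subordinate to P, and let S^(1) be a system of finite first return time maps subordinate to the partition P_1(S). Then there exist a system S' = (T', (X'_t), (K'_t), (Y'_{t,k}), (J'_{t,k})) of finite first return time maps subordinate to P and a system S^(1)' = (T^(1)', (X^(1)'_t), (K^(1)'_t), (Y^(1)'_{t,k}), (J^(1)'_{t,k})) of finite first return time maps subordinate to P_1(S) such that: (a) T' = T and X'_t = X_t for all t ∈ {1, …, T}; (b) P_1(S') is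 finer than P_1(S) and P_2(S') is finer than P_2(S); (c) for each s ∈ {1, …, T^(1)'} there are t_s ∈ {1, …, T} and k_s ∈ {1, …, K'_{t_s}} such that X^(1)'_s = Y'_{t_s,k_s}. -/
open Set Topology

variable {X : Type*}

namespace RSAux
variable {X : Type*} [TopologicalSpace X]

lemma li (h : X ≃ₜ X) (n : ℕ) : Function.LeftInverse ((⇑h.symm)^[n]) ((⇑h)^[n]) :=
  Function.LeftInverse.iterate h.symm_apply_apply n

lemma ri (h : X ≃ₜ X) (n : ℕ) : Function.RightInverse ((⇑h.symm)^[n]) ((⇑h)^[n]) :=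
  Function.LeftInverse.iterate h.apply_symm_apply n

lemma iter_inj (h : X ≃ₜ X) (n : ℕ) : Function.Injective ((⇑h)^[n]) := (li h n).injective

lemma mem_image_iter (h : X ≃ₜ X) (n : ℕ) (A : Set X) (x : X) :
    x ∈ (⇑h)^[n] '' A ↔ (⇑h.symm)^[n] x ∈ A := by
  constructor
  · rintro ⟨y, hy, rfl⟩; rwa [li h n y]
  · intro hx; exact ⟨_, hx, ri h n x⟩

lemma iter_comm (h : X ≃ₜ X) (m n : ℕ) (x : X) :
    (⇑h)^[m] ((⇑h)^[n] x) = (⇑h)^[n] ((⇑h)^[m] x) := by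
  rw [← Function.iterate_add_apply, ← Function.iterate_add_apply, Nat.add_comm]

lemma symm_iter_comm (h : X ≃ₜ X) (m n : ℕ) (x : X) :
    (⇑h.symm)^[m] ((⇑h)^[n] x) = (⇑h)^[n] ((⇑h.symm)^[m] x) := by
  apply iter_inj h m
  rw [ri h m, iter_comm h m n, ri h m]

lemma preimage_iter (h : X ≃ₜ X) (n : ℕ) (A : Set X) :
    (⇑h)^[n] ⁻¹' A = (⇑h.symm)^[n] '' A := by
  ext x
  rw [mem_image_iter h.symm n A x]
  simp [Homeomorph.symm_symm]

lemma cont_iter (h : X ≃ₜ X) (n : ℕ) : Continuous ((⇑h)^[n]) := by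
  induction n with
  | zero => simpa using continuous_id
  | succ n ih => rw [Function.iterate_succ]; exact ih.comp h.continuous

lemma isOpen_preimage_iter (h : X ≃ₜ X) (n : ℕ) {A : Set X} (hA : IsOpen A) :
    IsOpen ((⇑h)^[n] ⁻¹' A) := hA.preimage (cont_iter h n)

lemma isCompact_preimage_iter (h : X ≃ₜ X) (n : ℕ) {A : Set X} (hA : IsCompact A) :
    IsCompact ((⇑h)^[n] ⁻¹' A) := by
  rw [preimage_iter]; exact hA.image (cont_iter h.symm n)

lemma mem_image_iter_preimage (h : X ≃ₜ X) (j m : ℕ) (A : Set X) (x : X) :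
    x ∈ (⇑h)^[j] '' ((⇑h)^[m] ⁻¹' A) ↔ (⇑h)^[m] x ∈ (⇑h)^[j] '' A := by
  rw [mem_image_iter, mem_image_iter, mem_preimage, symm_iter_comm]

lemma image_iter_preimage (h : X ≃ₜ X) (j m : ℕ) (A : Set X) :
    (⇑h)^[j] '' ((⇑h)^[m] ⁻¹' A) = (⇑h)^[m] ⁻¹' ((⇑h)^[j] '' A) := by
  ext x; rw [mem_image_iter_preimage]; rfl

section Col
variable (h : X ≃ₜ X) {P : Set (Set X)} (S : ReturnSystem X)

def colSet (t : Fin S.T) : Set X := ⋃ k, ⋃ j, ⋃ (_ : j < S.J t k), (⇑h)^[j] '' S.Y t k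

variable {h S}
variable (hS : IsReturnSystem h P S)

lemma mem_colSet {t k j x} (hj : j < S.J t k) (hx : x ∈ (⇑h)^[j] '' S.Y t k) :
    x ∈ colSet h S t :=
  mem_iUnion.2 ⟨k, mem_iUnion.2 ⟨j, mem_iUnion.2 ⟨hj, hx⟩⟩⟩

include hS

lemma colSet_exists (x : X) : ∃ t, x ∈ colSet h S t := by
  obtain ⟨⟨t, k, j⟩, ⟨hj, hx⟩, -⟩ := hS.tower x
  exact ⟨t, mem_colSet hj hx⟩

lemma colSet_unique {x t t'} (hx : x ∈ colSet h S t) (hx' : x ∈ colSet h S t') : t = t' := by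
  simp only [colSet, mem_iUnion] at hx hx'
  obtain ⟨k, j, hj, hxx⟩ := hx
  obtain ⟨k', j', hj', hxx'⟩ := hx'
  obtain ⟨p, -, hu⟩ := hS.tower x
  have e1 := hu ⟨t, k, j⟩ ⟨hj, hxx⟩
  have e2 := hu ⟨t', k', j'⟩ ⟨hj', hxx'⟩
  exact congrArg Sigma.fst (e1.trans e2.symm)

lemma colSet_apply_mem {x t} (hx : x ∈ colSet h S t) : h x ∈ colSet h S t := by
  simp only [colSet, mem_iUnion] at hx
  obtain ⟨k, j, hj, y, hy, rfl⟩ := hx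
  rcases Nat.lt_or_ge (j+1) (S.J t k) with hlt | hge
  · exact mem_colSet hlt ⟨y, hy, Function.iterate_succ_apply' (⇑h) j y⟩
  · have hJ : j + 1 = S.J t k := le_antisymm hj hge
    have h1 : h ((⇑h)^[j] y) ∈ (⇑h)^[S.J t k] '' S.Y t k := by
      rw [← hJ]; exact ⟨y, hy, Function.iterate_succ_apply' (⇑h) j y⟩
    have hb : h ((⇑h)^[j] y) ∈ S.base t := by
      rw [← hS.image_iUnion t]; exact mem_iUnion.2 ⟨k, h1⟩
    rw [← hS.Y_iUnion t] at hb
    obtain ⟨k', hk'⟩ := mem_iUnion.1 hb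
    exact mem_colSet (hS.J_pos t k') (by simpa using hk')

lemma colSet_apply_iff {x t} : h x ∈ colSet h S t ↔ x ∈ colSet h S t := by
  constructor
  · intro hx
    obtain ⟨t'', hx''⟩ := colSet_exists hS x
    have h2 := colSet_apply_mem hS hx''
    have e : t = t'' := colSet_unique hS hx h2
    rw [e]; exact hx''
  · exact colSet_apply_mem hS

lemma colSet_iterate_iff {t} (n : ℕ) (x : X) :
    (⇑h)^[n] x ∈ colSet h S t ↔ x ∈ colSet h S t := by
  induction n with
  | zero => simp
  | succ n ih => rw [Function.iterate_succ_apply', colSet_apply_iff hS, ih]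

end Col


section Main
variable (h : X ≃ₜ X) (S S1 : ReturnSystem X) (j0 : Fin S1.T → ℕ)

/-- Pulled-back bases for the new system subordinate to `P₁(S)`. -/
def B (s : Fin S1.T) : Set X := (⇑h)^[j0 s] ⁻¹' (S1.base s)

/-- The new system subordinate to `P₁(S)`: `S1` with each base pulled back to level 0. -/
def S1c : ReturnSystem X :=
  ⟨S1.T, B h S1 j0, S1.K, fun s k => (⇑h)^[j0 s] ⁻¹' (S1.Y s k), S1.J⟩

def d : ℕ := S1.T + 1

lemma d_pos : 0 < d S1 := Nat.succ_pos _

def K' (t : Fin S.T) : ℕ := S.K t * d S1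

lemma kIdx_lt (t : Fin S.T) (i : Fin (K' S S1 t)) : i.1 / d S1 < S.K t :=
  (Nat.div_lt_iff_lt_mul (d_pos S1)).2 i.2

def kIdx (t : Fin S.T) (i : Fin (K' S S1 t)) : Fin (S.K t) := ⟨i.1 / d S1, kIdx_lt S S1 t i⟩

def Y' (t : Fin S.T) (i : Fin (K' S S1 t)) : Set X :=
  if hr : i.1 % d S1 < S1.T then B h S1 j0 ⟨i.1 % d S1, hr⟩ ∩ S.Y t (kIdx S S1 t i)
  else S.Y t (kIdx S S1 t i) \ ⋃ s, B h S1 j0 s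

def J' (t : Fin S.T) (i : Fin (K' S S1 t)) : ℕ := S.J t (kIdx S S1 t i)

variable {h S S1 j0}
variable {P : Set (Set X)} {t1 : Fin S1.T → Fin S.T} {k1 : ∀ s, Fin (S.K (t1 s))}
variable (hS : IsReturnSystem h P S) (hS1 : IsReturnSystem h (S.partOne h) S1)
variable (hq1 : ∀ s, j0 s < S.J (t1 s) (k1 s))
variable (hq2 : ∀ s, S1.base s ⊆ (⇑h)^[j0 s] '' S.Y (t1 s) (k1 s))

include hq2 in
lemma B_subset (s : Fin S1.T) : B h S1 j0 s ⊆ S.Y (t1 s) (k1 s) := by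
  intro x hx
  have h2 := hq2 s hx
  rw [mem_image_iter] at h2
  rwa [li h (j0 s) x] at h2

include hS1 in
lemma B_mem_colSet1 {x : X} {s : Fin S1.T} (hx : x ∈ B h S1 j0 s) :
    x ∈ colSet h S1 s := by
  have hb : (⇑h)^[j0 s] x ∈ S1.base s := hx
  rw [← hS1.Y_iUnion s] at hb
  obtain ⟨k, hk⟩ := mem_iUnion.1 hb
  have h3 : (⇑h)^[j0 s] x ∈ colSet h S1 s :=
    mem_colSet (hS1.J_pos s k) (by simpa using hk)
  rwa [colSet_iterate_iff hS1] at h3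

include hS1 in
lemma B_mem_unique {x : X} {s s' : Fin S1.T} (hx : x ∈ B h S1 j0 s)
    (hx' : x ∈ B h S1 j0 s') : s = s' :=
  colSet_unique hS1 (B_mem_colSet1 hS1 hx) (B_mem_colSet1 hS1 hx')

include hS1 in
lemma B_isOpen (s : Fin S1.T) : IsOpen (B h S1 j0 s) :=
  isOpen_preimage_iter h _ (hS1.base_isOpen s)

include hS1 in
lemma B_isCompact (s : Fin S1.T) : IsCompact (B h S1 j0 s) :=
  isCompact_preimage_iter h _ (hS1.base_isCompact s)

lemma Y'_eq_pos (t : Fin S.T) (i : Fin (K' S S1 t)) (hr : i.1 % d S1 < S1.T) :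
    Y' h S S1 j0 t i = B h S1 j0 ⟨i.1 % d S1, hr⟩ ∩ S.Y t (kIdx S S1 t i) := dif_pos hr

lemma Y'_eq_neg (t : Fin S.T) (i : Fin (K' S S1 t)) (hr : ¬ i.1 % d S1 < S1.T) :
    Y' h S S1 j0 t i = S.Y t (kIdx S S1 t i) \ ⋃ s, B h S1 j0 s := dif_neg hr

lemma Y'_subset (t : Fin S.T) (i : Fin (K' S S1 t)) :
    Y' h S S1 j0 t i ⊆ S.Y t (kIdx S S1 t i) := by
  unfold Y'; split
  · exact inter_subset_right
  · exact diff_subset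

include hS1 in
lemma mem_Y'_unique {y : X} {t : Fin S.T} {i i' : Fin (K' S S1 t)}
    (hy : y ∈ Y' h S S1 j0 t i) (hy' : y ∈ Y' h S S1 j0 t i')
    (hk : kIdx S S1 t i = kIdx S S1 t i') : i = i' := by
  have hd : d S1 = S1.T + 1 := rfl
  have hdiv : i.1 / d S1 = i'.1 / d S1 := congrArg Fin.val hk
  have hmod : i.1 % d S1 = i'.1 % d S1 := by
    rcases Nat.lt_or_ge (i.1 % d S1) S1.T with hr | hr <;>
      rcases Nat.lt_or_ge (i'.1 % d S1) S1.T with hr' | hr'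
    · rw [Y'_eq_pos t i hr] at hy; rw [Y'_eq_pos t i' hr'] at hy'
      exact congrArg Fin.val (B_mem_unique hS1 hy.1 hy'.1)
    · rw [Y'_eq_pos t i hr] at hy; rw [Y'_eq_neg t i' (Nat.not_lt.2 hr')] at hy'
      exact absurd (mem_iUnion.2 ⟨_, hy.1⟩) hy'.2
    · rw [Y'_eq_neg t i (Nat.not_lt.2 hr)] at hy; rw [Y'_eq_pos t i' hr'] at hy'
      exact absurd (mem_iUnion.2 ⟨_, hy'.1⟩) hy.2
    · have m1 : i.1 % d S1 < d S1 := Nat.mod_lt _ (d_pos S1)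
      have m2 : i'.1 % d S1 < d S1 := Nat.mod_lt _ (d_pos S1)
      omega
  have e1 := Nat.div_add_mod i.1 (d S1)
  have e2 := Nat.div_add_mod i'.1 (d S1)
  have e3 : d S1 * (i.1 / d S1) = d S1 * (i'.1 / d S1) := by rw [hdiv]
  exact Fin.ext (by omega)

lemma enc_lt (t : Fin S.T) (k : Fin (S.K t)) {r : ℕ} (hr : r < d S1) :
    r + k.1 * d S1 < K' S S1 t :=
  calc r + k.1 * d S1 < d S1 + k.1 * d S1 := by omega
    _ = (k.1 + 1) * d S1 := by ring
    _ ≤ S.K t * d S1 := Nat.mul_le_mul_right _ k.2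

lemma enc_mod (t : Fin S.T) (k : Fin (S.K t)) {r : ℕ} (hr : r < d S1) :
    (r + k.1 * d S1) % d S1 = r := by
  rw [Nat.add_mul_mod_self_right, Nat.mod_eq_of_lt hr]

lemma enc_div (t : Fin S.T) (k : Fin (S.K t)) {r : ℕ} (hr : r < d S1) :
    (r + k.1 * d S1) / d S1 = k.1 := by
  rw [Nat.add_mul_div_right _ _ (d_pos S1), Nat.div_eq_of_lt hr, Nat.zero_add]

lemma exists_Y'_mem {y : X} {t : Fin S.T} {k : Fin (S.K t)} (hy : y ∈ S.Y t k) :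
    ∃ i, kIdx S S1 t i = k ∧ y ∈ Y' h S S1 j0 t i := by
  by_cases hb : ∃ s, y ∈ B h S1 j0 s
  · obtain ⟨s, hs⟩ := hb
    have hr : s.1 < d S1 := Nat.lt_succ_of_lt s.2
    set i : Fin (K' S S1 t) := ⟨s.1 + k.1 * d S1, enc_lt t k hr⟩ with hi
    have hmod : i.1 % d S1 = s.1 := enc_mod t k hr
    have hk : kIdx S S1 t i = k := Fin.ext (enc_div t k hr)
    have hr' : i.1 % d S1 < S1.T := by rw [hmod]; exact s.2
    refine ⟨i, hk, ?_⟩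
    rw [Y'_eq_pos t i hr']
    have hfin : (⟨i.1 % d S1, hr'⟩ : Fin S1.T) = s := Fin.ext hmod
    rw [hfin, hk]
    exact ⟨hs, hy⟩
  · have hr : S1.T < d S1 := Nat.lt_succ_self _
    set i : Fin (K' S S1 t) := ⟨S1.T + k.1 * d S1, enc_lt t k hr⟩ with hi
    have hmod : i.1 % d S1 = S1.T := enc_mod t k hr
    have hk : kIdx S S1 t i = k := Fin.ext (enc_div t k hr)
    refine ⟨i, hk, ?_⟩
    rw [Y'_eq_neg t i (by rw [hmod]; exact lt_irrefl _), hk]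
    refine ⟨hy, ?_⟩
    rw [mem_iUnion]; push_neg at hb ⊢; exact hb


include hS hS1 in
lemma isRS_S' [T2Space X] :
    IsReturnSystem h P ⟨S.T, S.base, K' S S1, Y' h S S1 j0, J' S S1⟩ where
  T_pos := hS.T_pos
  base_isCompact := hS.base_isCompact
  base_isOpen := hS.base_isOpen
  base_subset := hS.base_subset
  K_pos t := Nat.mul_pos (hS.K_pos t) (d_pos S1)
  Y_isCompact t i := by
    show IsCompact (Y' h S S1 j0 t i)
    rcases Nat.lt_or_ge (i.1 % d S1) S1.T with hr | hr
    · rw [Y'_eq_pos (S := S) (S1 := S1) t i hr]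
      exact (B_isCompact hS1 _).inter (hS.Y_isCompact t _)
    · rw [Y'_eq_neg (S := S) (S1 := S1) t i (Nat.not_lt.2 hr)]
      exact (hS.Y_isCompact t _).diff (isOpen_iUnion fun s => B_isOpen hS1 s)
  Y_isOpen t i := by
    show IsOpen (Y' h S S1 j0 t i)
    rcases Nat.lt_or_ge (i.1 % d S1) S1.T with hr | hr
    · rw [Y'_eq_pos (S := S) (S1 := S1) t i hr]
      exact (B_isOpen hS1 _).inter (hS.Y_isOpen t _)
    · rw [Y'_eq_neg (S := S) (S1 := S1) t i (Nat.not_lt.2 hr)]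
      exact (hS.Y_isOpen t _).sdiff
        (isClosed_iUnion_of_finite fun s => (B_isCompact hS1 s).isClosed)
  Y_disjoint t i i' hne := by
    show Disjoint (Y' h S S1 j0 t i) (Y' h S S1 j0 t i')
    by_cases hk : kIdx S S1 t i = kIdx S S1 t i'
    · exact Set.disjoint_left.2 fun y hy hy' => hne (mem_Y'_unique (S := S) (S1 := S1) hS1 hy hy' hk)
    · exact (hS.Y_disjoint t _ _ hk).mono (Y'_subset (S := S) (S1 := S1) t i) (Y'_subset (S := S) (S1 := S1) t i')
  Y_iUnion t := by
    show (⋃ i, Y' h S S1 j0 t i) = S.base t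
    apply Set.eq_of_subset_of_subset
    · refine iUnion_subset fun i => (Y'_subset (S := S) (S1 := S1) t i).trans ?_
      rw [← hS.Y_iUnion t]
      exact subset_iUnion _ _
    · intro y hy
      rw [← hS.Y_iUnion t] at hy
      obtain ⟨k, hk⟩ := mem_iUnion.1 hy
      obtain ⟨i, -, hi⟩ := exists_Y'_mem (S := S) (S1 := S1) (h := h) (j0 := j0) hk
      exact mem_iUnion.2 ⟨i, hi⟩
  J_pos t i := hS.J_pos t _
  returnTime t i y hy := by
    show firstReturnTime h (S.base t) y = (J' S S1 t i : ℕ∞)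
    exact hS.returnTime t _ y (Y'_subset (S := S) (S1 := S1) t i hy)
  image_disjoint t i i' hne := by
    show Disjoint ((⇑h)^[J' S S1 t i] '' Y' h S S1 j0 t i)
      ((⇑h)^[J' S S1 t i'] '' Y' h S S1 j0 t i')
    by_cases hk : kIdx S S1 t i = kIdx S S1 t i'
    · have hd : Disjoint (Y' h S S1 j0 t i) (Y' h S S1 j0 t i') :=
        Set.disjoint_left.2 fun y hy hy' => hne (mem_Y'_unique (S := S) (S1 := S1) hS1 hy hy' hk)
      have hJ : J' S S1 t i' = J' S S1 t i := by unfold J'; rw [hk]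
      rw [hJ]
      exact (Set.disjoint_image_iff (iter_inj h _)).2 hd
    · exact (hS.image_disjoint t _ _ hk).mono (image_mono (Y'_subset (S := S) (S1 := S1) t i))
        (image_mono (Y'_subset (S := S) (S1 := S1) t i'))
  image_iUnion t := by
    show (⋃ i, (⇑h)^[J' S S1 t i] '' Y' h S S1 j0 t i) = S.base t
    apply Set.eq_of_subset_of_subset
    · refine iUnion_subset fun i => ?_
      refine (image_mono (Y'_subset (S := S) (S1 := S1) t i)).trans ?_
      rw [← hS.image_iUnion t]
      exact subset_iUnion (fun k => (⇑h)^[S.J t k] '' S.Y t k) (kIdx S S1 t i)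
    · intro x hx
      rw [← hS.image_iUnion t] at hx
      obtain ⟨k, y, hy, rfl⟩ := mem_iUnion.1 hx
      obtain ⟨i, hki, hi⟩ := exists_Y'_mem (S := S) (S1 := S1) (h := h) (j0 := j0) hy
      have hJ : J' S S1 t i = S.J t k := by unfold J'; rw [hki]
      refine mem_iUnion.2 ⟨i, y, hi, ?_⟩
      rw [hJ]
  tower x := by
    show ∃! p : Σ t : Fin S.T, Fin (K' S S1 t) × ℕ,
      p.2.2 < J' S S1 p.1 p.2.1 ∧ x ∈ (⇑h)^[p.2.2] '' Y' h S S1 j0 p.1 p.2.1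
    obtain ⟨⟨t, k, j⟩, ⟨hj, hx⟩, huniq⟩ := hS.tower x
    rw [mem_image_iter] at hx
    obtain ⟨i, hki, hYi⟩ := exists_Y'_mem (S := S) (S1 := S1) (h := h) (j0 := j0) hx
    have hJi : J' S S1 t i = S.J t k := by unfold J'; rw [hki]
    refine ⟨⟨t, i, j⟩, ⟨by rw [hJi]; exact hj, (mem_image_iter h j _ x).2 hYi⟩, ?_⟩
    rintro ⟨t', i', j'⟩ ⟨hj', hx'⟩
    dsimp only at hj' hx'
    have hx'' : x ∈ (⇑h)^[j'] '' S.Y t' (kIdx S S1 t' i') :=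
      image_mono (Y'_subset (S := S) (S1 := S1) t' i') hx'
    have hj'' : j' < S.J t' (kIdx S S1 t' i') := hj'
    have heq := huniq ⟨t', kIdx S S1 t' i', j'⟩ ⟨hj'', hx''⟩
    obtain ⟨ht, hh⟩ := Sigma.ext_iff.mp heq
    dsimp only at ht hh
    subst ht
    have hpair : (kIdx S S1 t' i', j') = (k, j) := eq_of_heq hh
    obtain ⟨hkk, hjj⟩ := Prod.ext_iff.mp hpair
    dsimp only at hkk hjj
    subst hjj
    have hy' : (⇑h.symm)^[j'] x ∈ Y' h S S1 j0 t' i' := (mem_image_iter h j' _ x).1 hx'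
    have hYi' : (⇑h.symm)^[j'] x ∈ Y' h S S1 j0 t' i := hYi
    have hii : i' = i := mem_Y'_unique (S := S) (S1 := S1) hS1 hy' hYi' (hkk.trans hki.symm)
    rw [hii]


include hS hS1 hq2 in
lemma isRS_S1c : IsReturnSystem h (S.partOne h) (S1c h S1 j0) where
  T_pos := hS1.T_pos
  base_isCompact s := B_isCompact hS1 s
  base_isOpen s := B_isOpen hS1 s
  base_subset s := ⟨S.Y (t1 s) (k1 s), ⟨t1 s, k1 s, 0, hS.J_pos _ _, by simp⟩, B_subset hq2 s⟩
  K_pos := hS1.K_pos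
  Y_isCompact s k := isCompact_preimage_iter h _ (hS1.Y_isCompact s k)
  Y_isOpen s k := isOpen_preimage_iter h _ (hS1.Y_isOpen s k)
  Y_disjoint s k k' hne := (hS1.Y_disjoint s k k' hne).preimage _
  Y_iUnion s := by
    show (⋃ k, (⇑h)^[j0 s] ⁻¹' (S1.Y s k)) = B h S1 j0 s
    erw [← preimage_iUnion, hS1.Y_iUnion s]
    rfl
  J_pos := hS1.J_pos
  returnTime s k x hx := by
    show firstReturnTime h (B h S1 j0 s) x = (S1.J s k : ℕ∞)
    have hx' : (⇑h)^[j0 s] x ∈ S1.Y s k := hx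
    have hset : {n : ℕ | 0 < n ∧ (⇑h)^[n] x ∈ B h S1 j0 s}
        = {n : ℕ | 0 < n ∧ (⇑h)^[n] ((⇑h)^[j0 s] x) ∈ S1.base s} := by
      ext n
      simp only [mem_setOf_eq, B, mem_preimage]
      rw [iter_comm h (j0 s) n x]
    have e : firstReturnTime h (B h S1 j0 s) x
        = firstReturnTime h (S1.base s) ((⇑h)^[j0 s] x) := by
      unfold firstReturnTime
      rw [hset]
    rw [e]
    exact hS1.returnTime s k _ hx'
  image_disjoint s k k' hne := by
    show Disjoint ((⇑h)^[S1.J s k] '' ((⇑h)^[j0 s] ⁻¹' S1.Y s k))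
      ((⇑h)^[S1.J s k'] '' ((⇑h)^[j0 s] ⁻¹' S1.Y s k'))
    rw [image_iter_preimage, image_iter_preimage]
    exact (hS1.image_disjoint s k k' hne).preimage _
  image_iUnion s := by
    show (⋃ k, (⇑h)^[S1.J s k] '' ((⇑h)^[j0 s] ⁻¹' S1.Y s k)) = B h S1 j0 s
    simp only [image_iter_preimage]
    erw [← preimage_iUnion, hS1.image_iUnion s]
    rfl
  tower x := by
    show ∃! p : Σ s : Fin S1.T, Fin (S1.K s) × ℕ,
      p.2.2 < S1.J p.1 p.2.1 ∧ x ∈ (⇑h)^[p.2.2] '' ((⇑h)^[j0 p.1] ⁻¹' S1.Y p.1 p.2.1)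
    obtain ⟨s0, hs0⟩ := colSet_exists hS1 x
    have hgs : (⇑h)^[j0 s0] x ∈ colSet h S1 s0 := (colSet_iterate_iff hS1 _ _).2 hs0
    obtain ⟨⟨s2, k, j⟩, ⟨hj, hmem⟩, hu⟩ := hS1.tower ((⇑h)^[j0 s0] x)
    have hss : s2 = s0 := colSet_unique hS1 (mem_colSet hj hmem) hgs
    subst hss
    refine ⟨⟨s2, k, j⟩, ⟨hj, (mem_image_iter_preimage h j (j0 s2) _ x).2 hmem⟩, ?_⟩
    rintro ⟨s', k', j'⟩ ⟨hj', hx'⟩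
    dsimp only at hj' hx'
    have hg' : (⇑h)^[j0 s'] x ∈ (⇑h)^[j'] '' S1.Y s' k' :=
      (mem_image_iter_preimage h j' (j0 s') _ x).1 hx'
    have hxc : x ∈ colSet h S1 s' := (colSet_iterate_iff hS1 _ _).1 (mem_colSet hj' hg')
    have hss' : s' = s2 := colSet_unique hS1 hxc hs0
    subst hss'
    exact hu ⟨s', k', j'⟩ ⟨hj', hg'⟩

lemma finer_partOne :
    Finer ((ReturnSystem.mk S.T S.base (K' S S1) (Y' h S S1 j0) (J' S S1)).partOne h)
      (S.partOne h) := by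
  rintro U ⟨t, i, j, hj, rfl⟩
  exact ⟨(⇑h)^[j] '' S.Y t (kIdx S S1 t i), ⟨t, kIdx S S1 t i, j, hj, rfl⟩,
    image_mono (Y'_subset (S := S) (S1 := S1) t i)⟩

lemma finer_partTwo :
    Finer ((ReturnSystem.mk S.T S.base (K' S S1) (Y' h S S1 j0) (J' S S1)).partTwo h)
      (S.partTwo h) := by
  rintro U ⟨t, i, j, hj0, hj1, rfl⟩
  exact ⟨(⇑h)^[j] '' S.Y t (kIdx S S1 t i), ⟨t, kIdx S S1 t i, j, hj0, hj1, rfl⟩,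
    image_mono (Y'_subset (S := S) (S1 := S1) t i)⟩

include hq2 in
lemma S1c_base_eq (s : Fin S1.T) :
    ∃ (t : Fin S.T) (k : Fin (K' S S1 t)), (S1c h S1 j0).base s = Y' h S S1 j0 t k := by
  have hr : s.1 < d S1 := Nat.lt_succ_of_lt s.2
  set i : Fin (K' S S1 (t1 s)) := ⟨s.1 + (k1 s).1 * d S1, enc_lt (t1 s) (k1 s) hr⟩ with hi
  have hmod : i.1 % d S1 = s.1 := enc_mod (t1 s) (k1 s) hr
  have hk : kIdx S S1 (t1 s) i = k1 s := Fin.ext (enc_div (t1 s) (k1 s) hr)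
  have hr' : i.1 % d S1 < S1.T := by rw [hmod]; exact s.2
  refine ⟨t1 s, i, ?_⟩
  show B h S1 j0 s = Y' h S S1 j0 (t1 s) i
  rw [Y'_eq_pos (S := S) (S1 := S1) (t1 s) i hr']
  have hfin : (⟨i.1 % d S1, hr'⟩ : Fin S1.T) = s := Fin.ext hmod
  rw [hfin, hk]
  exact (inter_eq_left.2 (B_subset hq2 s)).symm

end Main
end RSAux

/-- Theorem (Statement 9): given a system `S` subordinate to `P` and a system `S¹`
subordinate to `P₁(S)`, there are a refinement `S'` of `S` with the same bases and a system
`S¹'` subordinate to `P₁(S)` whose bases are among the pieces `Y'_{t,k}` of `S'`. -/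
theorem returnSystem_new_bases_from_old_partition
    {X : Type*} [TopologicalSpace X] [CompactSpace X]
    [TopologicalSpace.MetrizableSpace X] [TotallyDisconnectedSpace X] (h : X ≃ₜ X)
    (P : Set (Set X)) (hP : IsPartition P)
    (S : ReturnSystem X) (hS : IsReturnSystem h P S)
    (S1 : ReturnSystem X) (hS1 : IsReturnSystem h (S.partOne h) S1) :
    ∃ (K' : Fin S.T → ℕ) (Y' : (t : Fin S.T) → Fin (K' t) → Set X)
      (J' : (t : Fin S.T) → Fin (K' t) → ℕ) (S1' : ReturnSystem X),
      IsReturnSystem h P ⟨S.T, S.base, K', Y', J'⟩ ∧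
      IsReturnSystem h (S.partOne h) S1' ∧
      Finer ((ReturnSystem.mk S.T S.base K' Y' J').partOne h) (S.partOne h) ∧
      Finer ((ReturnSystem.mk S.T S.base K' Y' J').partTwo h) (S.partTwo h) ∧
      ∀ s : Fin S1'.T, ∃ (t : Fin S.T) (k : Fin (K' t)), S1'.base s = Y' t k := by
  have hch : ∀ s, ∃ (t : Fin S.T) (k : Fin (S.K t)) (j : ℕ),
      j < S.J t k ∧ S1.base s ⊆ (⇑h)^[j] '' S.Y t k := by
    intro s
    obtain ⟨U, hU, hsub⟩ := hS1.base_subset s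
    obtain ⟨t, k, j, hj, rfl⟩ := hU
    exact ⟨t, k, j, hj, hsub⟩
  choose t1 k1 j0 hq1 hq2 using hch
  exact ⟨RSAux.K' S S1, RSAux.Y' h S S1 j0, RSAux.J' S S1, RSAux.S1c h S1 j0,
    RSAux.isRS_S' hS hS1, RSAux.isRS_S1c hS hS1 hq2,
    RSAux.finer_partOne, RSAux.finer_partTwo, RSAux.S1c_base_eq hq2⟩
end

section
/- Let (X, h) be a zero-dimensional system such that for every partition R of X there exists a system of finite first return time maps subordinate to R. Let P and P' be partitions of X, and let S = (T, (X_t), (K_t), (Y_{t,k}), (J_{t,k})) be a system of finite first return time maps subordinate to P. Then there is a system S' = (T', (X'_t), (K'_t), (Y'_{t,k}), (J'_{t,k})) of finite first return time maps subordinate to P' such that for each t' ∈ {1, …, T'} there is a t ∈ {1, …, T} with X'_{t'} ⊆ X_t. -/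
open Set Topology

variable {X : Type*}

section Aux

variable [TopologicalSpace X] (h : X ≃ₜ X)

lemma iter_preimage (m : ℕ) (U : Set X) : (⇑h)^[m] ⁻¹' U = (⇑h.symm)^[m] '' U := by
  ext x
  constructor
  · intro hx
    have hli : Function.LeftInverse ⇑h.symm ⇑h := h.symm_apply_apply
    exact ⟨(⇑h)^[m] x, hx, (hli.iterate m) x⟩
  · rintro ⟨y, hy, rfl⟩
    show (⇑h)^[m] ((⇑h.symm)^[m] y) ∈ U
    have hri : Function.LeftInverse ⇑h ⇑h.symm := h.apply_symm_apply
    rw [(hri.iterate m) y]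
    exact hy

lemma frt_iterate_image (B : Set X) (m : ℕ) (x : X) :
    firstReturnTime h ((⇑h)^[m] '' B) ((⇑h)^[m] x) = firstReturnTime h B x := by
  have hset : {n : ℕ | 0 < n ∧ (⇑h)^[n] ((⇑h)^[m] x) ∈ (⇑h)^[m] '' B}
      = {n : ℕ | 0 < n ∧ (⇑h)^[n] x ∈ B} := by
    ext n
    have key : (⇑h)^[n] ((⇑h)^[m] x) = (⇑h)^[m] ((⇑h)^[n] x) := by
      rw [← Function.iterate_add_apply, ← Function.iterate_add_apply, add_comm]
    simp only [Set.mem_setOf_eq, key]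
    exact and_congr_right (fun _ => (h.injective.iterate m).mem_set_image)
  unfold firstReturnTime
  rw [hset]

lemma iter_isOpenMap (n : ℕ) : IsOpenMap ((⇑h)^[n]) := by
  induction n with
  | zero => simpa using IsOpenMap.id
  | succ n ih => rw [Function.iterate_succ']; exact h.isOpenMap.comp ih

lemma iter_image_comm (a b : ℕ) (s : Set X) :
    (⇑h)^[a] '' ((⇑h)^[b] '' s) = (⇑h)^[b] '' ((⇑h)^[a] '' s) := by
  rw [← Set.image_comp, ← Set.image_comp, ← Function.iterate_add, ← Function.iterate_add,
    add_comm]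

def colSet (S : ReturnSystem X) (t : Fin S.T) : Set X :=
  ⋃ (k) (j : ℕ) (_ : j < S.J t k), (⇑h)^[j] '' S.Y t k

lemma mem_colSet_iff' {S : ReturnSystem X} {t : Fin S.T} {x : X} :
    x ∈ colSet h S t ↔ ∃ k, ∃ j : ℕ, j < S.J t k ∧ x ∈ (⇑h)^[j] '' S.Y t k := by
  simp [colSet]

lemma mem_colSet_iff {h : X ≃ₜ X} {S : ReturnSystem X} {t : Fin S.T} {x : X} :
    x ∈ colSet h S t ↔ ∃ k, ∃ j : ℕ, j < S.J t k ∧ x ∈ (⇑h)^[j] '' S.Y t k :=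
  mem_colSet_iff' h

end Aux

section Aux2

variable [TopologicalSpace X] {h : X ≃ₜ X} {P : Set (Set X)} {S : ReturnSystem X}

lemma tower_eq (hS : IsReturnSystem h P S) {t1 t2 : Fin S.T} {k1 : Fin (S.K t1)} {k2 : Fin (S.K t2)} {j1 j2 : ℕ} {x : X}
    (hj1 : j1 < S.J t1 k1) (hm1 : x ∈ (⇑h)^[j1] '' S.Y t1 k1)
    (hj2 : j2 < S.J t2 k2) (hm2 : x ∈ (⇑h)^[j2] '' S.Y t2 k2) :
    (⟨t1, k1, j1⟩ : Σ t : Fin S.T, Fin (S.K t) × ℕ) = ⟨t2, k2, j2⟩ := by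
  obtain ⟨p, _, hu⟩ := hS.tower x
  rw [hu ⟨t1, k1, j1⟩ ⟨hj1, hm1⟩, hu ⟨t2, k2, j2⟩ ⟨hj2, hm2⟩]

lemma tower_t_eq (hS : IsReturnSystem h P S) {t1 t2 : Fin S.T} {k1 : Fin (S.K t1)} {k2 : Fin (S.K t2)} {j1 j2 : ℕ} {x : X}
    (hj1 : j1 < S.J t1 k1) (hm1 : x ∈ (⇑h)^[j1] '' S.Y t1 k1)
    (hj2 : j2 < S.J t2 k2) (hm2 : x ∈ (⇑h)^[j2] '' S.Y t2 k2) : t1 = t2 :=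
  congrArg Sigma.fst (tower_eq hS hj1 hm1 hj2 hm2)

lemma tower_kj_eq (hS : IsReturnSystem h P S) {t : Fin S.T} {k1 k2 : Fin (S.K t)} {j1 j2 : ℕ} {x : X}
    (hj1 : j1 < S.J t k1) (hm1 : x ∈ (⇑h)^[j1] '' S.Y t k1)
    (hj2 : j2 < S.J t k2) (hm2 : x ∈ (⇑h)^[j2] '' S.Y t k2) : k1 = k2 ∧ j1 = j2 := by
  have := tower_eq hS hj1 hm1 hj2 hm2
  have h2 : ((k1, j1) : Fin (S.K t) × ℕ) = (k2, j2) := by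
    simpa using this
  exact ⟨congrArg Prod.fst h2, congrArg Prod.snd h2⟩

lemma colSet_cover (hS : IsReturnSystem h P S) (x : X) : ∃ t, x ∈ colSet h S t := by
  obtain ⟨⟨t, k, j⟩, ⟨hj, hm⟩, -⟩ := hS.tower x
  exact ⟨t, mem_colSet_iff.mpr ⟨k, j, hj, hm⟩⟩

lemma colSet_unique (hS : IsReturnSystem h P S) {t1 t2 : Fin S.T} {x : X} (h1 : x ∈ colSet h S t1)
    (h2 : x ∈ colSet h S t2) : t1 = t2 := by
  obtain ⟨k1, j1, hj1, hm1⟩ := mem_colSet_iff.mp h1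
  obtain ⟨k2, j2, hj2, hm2⟩ := mem_colSet_iff.mp h2
  exact tower_t_eq hS hj1 hm1 hj2 hm2

lemma image_colSet_subset (hS : IsReturnSystem h P S) (t : Fin S.T) : ⇑h '' colSet h S t ⊆ colSet h S t := by
  rintro _ ⟨x, hx, rfl⟩
  obtain ⟨k, j, hj, y, hy, rfl⟩ := mem_colSet_iff.mp hx
  have hxx : h ((⇑h)^[j] y) = (⇑h)^[j+1] y := by
    rw [Function.iterate_succ_apply']
  rw [hxx]
  rcases lt_or_eq_of_le (Nat.succ_le_of_lt hj) with hlt | heq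
  · exact mem_colSet_iff.mpr ⟨k, j + 1, hlt, ⟨y, hy, rfl⟩⟩
  · have hb : (⇑h)^[j+1] y ∈ S.base t := by
      rw [← hS.image_iUnion t]
      exact Set.mem_iUnion.mpr ⟨k, heq ▸ ⟨y, hy, rfl⟩⟩
    rw [← hS.Y_iUnion t] at hb
    obtain ⟨k', hk'⟩ := Set.mem_iUnion.mp hb
    exact mem_colSet_iff.mpr ⟨k', 0, hS.J_pos t k', by simpa using hk'⟩

lemma image_colSet (hS : IsReturnSystem h P S) (t : Fin S.T) : ⇑h '' colSet h S t = colSet h S t := by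
  apply subset_antisymm (image_colSet_subset hS t)
  intro x hx
  obtain ⟨y, rfl⟩ := h.surjective x
  obtain ⟨s, hs⟩ := colSet_cover hS y
  have hmem : h y ∈ colSet h S s := image_colSet_subset hS s ⟨y, hs, rfl⟩
  have hst : s = t := colSet_unique hS hmem hx
  subst hst
  exact ⟨y, hs, rfl⟩

lemma iterate_image_colSet (hS : IsReturnSystem h P S) (t : Fin S.T) (m : ℕ) :
    (⇑h)^[m] '' colSet h S t = colSet h S t := by
  induction m with
  | zero => simp
  | succ n ih =>
    rw [Function.iterate_succ', Set.image_comp, ih, image_colSet hS]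

end Aux2

/-- Theorem (Statement 10): if `(X, h)` admits systems of finite first return time maps
subordinate to every partition, then given a system `S` subordinate to `P` and another
partition `P'`, there is a system subordinate to `P'` whose bases lie under the bases of
`S`. -/
theorem returnSystem_bases_under_old_bases
    {X : Type*} [TopologicalSpace X] [CompactSpace X]
    [TopologicalSpace.MetrizableSpace X] [TotallyDisconnectedSpace X] (h : X ≃ₜ X)
    (hadm : ∀ R : Set (Set X), IsPartition R → ∃ S : ReturnSystem X, IsReturnSystem h R S)
    (P P' : Set (Set X)) (hP : IsPartition P) (hP' : IsPartition P')
    (S : ReturnSystem X) (hS : IsReturnSystem h P S) :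
    ∃ S' : ReturnSystem X, IsReturnSystem h P' S' ∧
      ∀ t' : Fin S'.T, ∃ t : Fin S.T, S'.base t' ⊆ S.base t := by
  classical
  obtain ⟨hP'fin, hP'cpt, hP'open, hP'disj, hP'cover⟩ := hP'
  -- The refined partition R
  set R : Set (Set X) :=
    {V | ∃ (t : Fin S.T) (k : Fin (S.K t)) (j : ℕ) (U : Set X),
      j < S.J t k ∧ U ∈ P' ∧ V = (⇑h)^[j] '' S.Y t k ∩ (⇑h)^[S.J t k - j] ⁻¹' U} with hRdef
  have hR : IsPartition R := by
    refine ⟨?_, ?_, ?_, ?_, ?_⟩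
    · -- finiteness
      set N := (Finset.univ : Finset (Σ t : Fin S.T, Fin (S.K t))).sup
        (fun p => S.J p.1 p.2) with hN
      have hsub2 : R ⊆ (fun q : (Σ t : Fin S.T, Fin (S.K t)) × ℕ × Set X =>
          (⇑h)^[q.2.1] '' S.Y q.1.1 q.1.2 ∩ (⇑h)^[S.J q.1.1 q.1.2 - q.2.1] ⁻¹' q.2.2) ''
          ((Set.univ : Set (Σ t : Fin S.T, Fin (S.K t))) ×ˢ ((Set.Iio (N + 1)) ×ˢ P')) := by
        rintro V ⟨t, k, j, U, hj, hU, rfl⟩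
        refine ⟨⟨⟨t, k⟩, j, U⟩, ⟨Set.mem_univ _, ?_, hU⟩, rfl⟩
        have : S.J t k ≤ N :=
          Finset.le_sup (f := fun p : Σ t : Fin S.T, Fin (S.K t) => S.J p.1 p.2)
            (Finset.mem_univ (⟨t, k⟩ : Σ t, Fin (S.K t)))
        exact lt_of_lt_of_le hj (le_trans this (Nat.le_succ N))
      exact ((Set.finite_univ.prod ((Set.finite_Iio _).prod hP'fin)).image _).subset hsub2
    · -- compactness
      rintro V ⟨t, k, j, U, hj, hU, rfl⟩
      have c1 : IsCompact ((⇑h)^[j] '' S.Y t k) :=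
        (hS.Y_isCompact t k).image (h.continuous.iterate j)
      have c2 : IsCompact ((⇑h)^[S.J t k - j] ⁻¹' U) := by
        rw [iter_preimage]
        exact (hP'cpt U hU).image (h.symm.continuous.iterate _)
      exact c1.inter c2
    · -- openness
      rintro V ⟨t, k, j, U, hj, hU, rfl⟩
      exact (iter_isOpenMap h j _ (hS.Y_isOpen t k)).inter
        ((hP'open U hU).preimage (h.continuous.iterate _))
    · -- pairwise disjoint
      rintro V1 hV1 V2 hV2 hne
      obtain ⟨t1, k1, j1, U1, hj1, hU1, rfl⟩ := hV1
      obtain ⟨t2, k2, j2, U2, hj2, hU2, rfl⟩ := hV2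
      refine Set.disjoint_left.mpr fun x hx1 hx2 => hne ?_
      obtain ⟨hm1, hu1⟩ := hx1
      obtain ⟨hm2, hu2⟩ := hx2
      have ht : t1 = t2 := tower_t_eq hS hj1 hm1 hj2 hm2
      subst ht
      obtain ⟨hk, hj⟩ := tower_kj_eq hS hj1 hm1 hj2 hm2
      subst hk
      subst hj
      by_cases hUe : U1 = U2
      · subst hUe; rfl
      · exact (Set.disjoint_left.mp (hP'disj hU1 hU2 hUe) hu1 hu2).elim
    · -- cover
      ext x
      simp only [Set.mem_sUnion, Set.mem_univ, iff_true]
      obtain ⟨⟨t, k, j⟩, ⟨hj, hmx⟩, -⟩ := hS.tower x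
      have : (⇑h)^[S.J t k - j] x ∈ ⋃₀ P' := hP'cover ▸ Set.mem_univ _
      obtain ⟨U, hU, hUx⟩ := this
      exact ⟨_, ⟨t, k, j, U, hj, hU, rfl⟩, hmx, hUx⟩
  obtain ⟨S', hS'⟩ := hadm R hR
  -- choose for each new base the datum it sits inside
  have hch : ∀ t' : Fin S'.T, ∃ (t : Fin S.T) (k : Fin (S.K t)) (j : ℕ) (U : Set X),
      j < S.J t k ∧ U ∈ P' ∧
      S'.base t' ⊆ (⇑h)^[j] '' S.Y t k ∩ (⇑h)^[S.J t k - j] ⁻¹' U := by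
    intro t'
    obtain ⟨V, hV, hsubV⟩ := hS'.base_subset t'
    obtain ⟨t, k, j, U, hj, hU, rfl⟩ := hV
    exact ⟨t, k, j, U, hj, hU, hsubV⟩
  choose tt kk jj UU hjlt hUmem hsub using hch
  set m : Fin S'.T → ℕ := fun t' => S.J (tt t') (kk t') - jj t' with hm
  refine ⟨⟨S'.T, fun t' => (⇑h)^[m t'] '' S'.base t', S'.K,
      fun t' k => (⇑h)^[m t'] '' S'.Y t' k, S'.J⟩, ?_, ?_⟩
  · refine
      { T_pos := hS'.T_pos
        base_isCompact := fun t' => (hS'.base_isCompact t').image (h.continuous.iterate _)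
        base_isOpen := fun t' => iter_isOpenMap h (m t') _ (hS'.base_isOpen t')
        base_subset := fun t' => ⟨UU t', hUmem t', ?_⟩
        K_pos := hS'.K_pos
        Y_isCompact := fun t' k => (hS'.Y_isCompact t' k).image (h.continuous.iterate _)
        Y_isOpen := fun t' k => iter_isOpenMap h (m t') _ (hS'.Y_isOpen t' k)
        Y_disjoint := fun t' k k' hkk =>
          (Set.disjoint_image_iff (h.injective.iterate _)).mpr (hS'.Y_disjoint t' k k' hkk)
        Y_iUnion := fun t' => by
          rw [← Set.image_iUnion, hS'.Y_iUnion]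
        J_pos := hS'.J_pos
        returnTime := fun t' k x hx => ?_
        image_disjoint := fun t' k k' hkk => ?_
        image_iUnion := fun t' => ?_
        tower := fun x => ?_ }
    · -- base_subset
      rintro _ ⟨y, hy, rfl⟩
      exact (hsub t' hy).2
    · -- returnTime
      obtain ⟨y, hy, rfl⟩ := hx
      rw [frt_iterate_image]
      exact hS'.returnTime t' k y hy
    · -- image_disjoint
      show Disjoint ((⇑h)^[S'.J t' k] '' ((⇑h)^[m t'] '' S'.Y t' k))
        ((⇑h)^[S'.J t' k'] '' ((⇑h)^[m t'] '' S'.Y t' k'))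
      rw [iter_image_comm h (S'.J t' k) (m t'), iter_image_comm h (S'.J t' k') (m t')]
      exact (Set.disjoint_image_iff (h.injective.iterate _)).mpr
        (hS'.image_disjoint t' k k' hkk)
    · -- image_iUnion
      calc (⋃ k, (⇑h)^[S'.J t' k] '' ((⇑h)^[m t'] '' S'.Y t' k))
          = ⋃ k, (⇑h)^[m t'] '' ((⇑h)^[S'.J t' k] '' S'.Y t' k) := by
            refine Set.iUnion_congr fun k => ?_
            rw [iter_image_comm]
        _ = (⇑h)^[m t'] '' ⋃ k, (⇑h)^[S'.J t' k] '' S'.Y t' k := by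
            rw [Set.image_iUnion]
        _ = (⇑h)^[m t'] '' S'.base t' := by rw [hS'.image_iUnion]
    · -- tower
      obtain ⟨t0, hx0⟩ := colSet_cover hS' x
      have hxW : x ∈ (⇑h)^[m t0] '' colSet h S' t0 := by
        rw [iterate_image_colSet hS']; exact hx0
      obtain ⟨y, hy, rfl⟩ := hxW
      obtain ⟨k0, j0, hj0, hy0⟩ := mem_colSet_iff.mp hy
      refine ⟨⟨t0, k0, j0⟩, ⟨hj0, ?_⟩, ?_⟩
      · show (⇑h)^[m t0] y ∈ (⇑h)^[j0] '' ((⇑h)^[m t0] '' S'.Y t0 k0)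
        rw [iter_image_comm]
        exact Set.mem_image_of_mem _ hy0
      · rintro ⟨t1, k1, j1⟩ ⟨hj1, hm1⟩
        have hm1' : (⇑h)^[m t0] y ∈ (⇑h)^[m t1] '' ((⇑h)^[j1] '' S'.Y t1 k1) := by
          rw [← iter_image_comm]
          exact hm1
        have hc1 : (⇑h)^[m t0] y ∈ colSet h S' t1 := by
          rw [← iterate_image_colSet hS' t1 (m t1)]
          refine Set.image_mono ?_ hm1'
          intro z hz
          exact mem_colSet_iff.mpr ⟨k1, j1, hj1, hz⟩
        have hc0 : (⇑h)^[m t0] y ∈ colSet h S' t0 := by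
          rw [← iterate_image_colSet hS' t0 (m t0)]
          exact Set.mem_image_of_mem _ hy
        have ht10 : t1 = t0 := colSet_unique hS' hc1 hc0
        subst ht10
        obtain ⟨z, hz, hze⟩ := hm1'
        have hzy : z = y := (h.injective.iterate (m t1)) hze
        subst hzy
        obtain ⟨hk, hj⟩ := tower_kj_eq hS' hj1 hz hj0 hy0
        subst hk
        subst hj
        rfl
  · -- bases under old bases
    intro t'
    refine ⟨tt t', ?_⟩
    intro x hx
    obtain ⟨y, hy, rfl⟩ := hx
    have h1 : y ∈ (⇑h)^[jj t'] '' S.Y (tt t') (kk t') := (hsub t' hy).1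
    have h2 : (⇑h)^[m t'] y ∈ (⇑h)^[m t'] '' ((⇑h)^[jj t'] '' S.Y (tt t') (kk t')) :=
      Set.mem_image_of_mem _ h1
    rw [← Set.image_comp, ← Function.iterate_add] at h2
    have hmj : m t' + jj t' = S.J (tt t') (kk t') := Nat.sub_add_cancel (le_of_lt (hjlt t'))
    rw [hmj] at h2
    have : (⇑h)^[S.J (tt t') (kk t')] '' S.Y (tt t') (kk t') ⊆ S.base (tt t') := by
      rw [← hS.image_iUnion (tt t')]
      exact Set.subset_iUnion (fun k => (⇑h)^[S.J (tt t') k] '' S.Y (tt t') k) (kk t')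
    exact this h2
end

section
/- Let (X, h) be a fiberwise essentially minimal zero-dimensional system, with closed set Z ⊆ X and quotient map ψ : X → Z as in the definition, let P be a partition of X, and let X_1, …, X_T be compact open subsets of X, each contained in an element of P. Then there exists a system S = (T, (X_t), (K_t), (Y_{t,k}), (J_{t,k})) of finite first return time maps subordinate to P whose bases are exactly X_1, …, X_T if and only if for every z ∈ Z there is precisely one t ∈ {1, …, T} such that X_t intersects ψ⁻¹(z), and moreover X_t ∩ ψ⁻¹(z) intersects the minimal set of (ψ⁻¹(z), h|_{ψ⁻¹(z)}). -/
open Set Topology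

variable {X : Type*}

section Helpers

open Function

variable {X : Type*} [TopologicalSpace X]

lemma symm_iter_apply_iter (h : X ≃ₜ X) (n : ℕ) (x : X) :
    (⇑h.symm)^[n] ((⇑h)^[n] x) = x :=
  (h.toEquiv.left_inv.iterate n) x

lemma iter_apply_symm_iter (h : X ≃ₜ X) (n : ℕ) (x : X) :
    (⇑h)^[n] ((⇑h.symm)^[n] x) = x :=
  (h.toEquiv.right_inv.iterate n) x

lemma symm_iter_of_iter (h : X ≃ₜ X) {i k : ℕ} (hik : i ≤ k) (x : X) :
    (⇑h.symm)^[i] ((⇑h)^[k] x) = (⇑h)^[k - i] x := by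
  rw [show k = i + (k - i) from (Nat.add_sub_cancel' hik).symm, Function.iterate_add_apply]
  rw [symm_iter_apply_iter]
  congr 1
  omega

lemma iter_of_symm_iter (h : X ≃ₜ X) {i k : ℕ} (hik : i ≤ k) (x : X) :
    (⇑h)^[i] ((⇑h.symm)^[k] x) = (⇑h.symm)^[k - i] x := by
  have hk : (⇑h.symm)^[k] x = (⇑h.symm)^[i] ((⇑h.symm)^[k - i] x) := by
    rw [← Function.iterate_add_apply, Nat.add_sub_cancel' hik]
  rw [hk, iter_apply_symm_iter]

lemma image_inv_fixed (h : X ≃ₜ X) {C : Set X} (hC : (⇑h.symm) '' C = C) :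
    (⇑h) '' C = C := by
  conv_lhs => rw [← hC]
  rw [← Set.image_comp, h.self_comp_symm, Set.image_id]

lemma exists_minimalSet_subset [CompactSpace X] (h : X ≃ₜ X) (L : Set X)
    (hne : L.Nonempty) (hcl : IsClosed L) (hinv : (⇑h) '' L = L) :
    ∃ M, M ⊆ L ∧ IsMinimalSet h M := by
  set S : Set (Set X) := {C | C ⊆ L ∧ C.Nonempty ∧ IsClosed C ∧ (⇑h) '' C = C} with hSdef
  obtain ⟨M, hML, hMmem, hMmin⟩ : ∃ M, M ⊆ L ∧ M ∈ S ∧ ∀ a ∈ S, a ⊆ M → a = M := by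
    have hchain : ∀ c ⊆ S, IsChain (· ⊆ ·) c → c.Nonempty →
        ∃ lb ∈ S, ∀ s ∈ c, lb ⊆ s := by
      intro c hcS hch hcne
      refine ⟨⋂₀ c, ⟨?_, ?_, ?_, ?_⟩, fun s hs => sInter_subset_of_mem hs⟩
      · obtain ⟨s, hs⟩ := hcne
        exact (sInter_subset_of_mem hs).trans (hcS hs).1
      · haveI : Nonempty c := hcne.to_subtype
        refine IsCompact.nonempty_sInter_of_directed_nonempty_isCompact_isClosed
          ?_ (fun U hU => (hcS hU).2.1)
          (fun U hU => (hcS hU).2.2.1.isCompact) (fun U hU => (hcS hU).2.2.1)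
        intro U hU V hV
        rcases eq_or_ne U V with rfl | hne'
        · exact ⟨U, hU, Subset.rfl, Subset.rfl⟩
        · rcases hch hU hV hne' with hUV | hVU
          · exact ⟨U, hU, Subset.rfl, hUV⟩
          · exact ⟨V, hV, hVU, Subset.rfl⟩
      · exact isClosed_sInter fun U hU => (hcS hU).2.2.1
      · rw [sInter_eq_iInter, Set.image_iInter h.bijective]
        exact iInter_congr fun U => (hcS U.2).2.2.2
    obtain ⟨M, h1, h2⟩ := zorn_superset_nonempty S hchain L ⟨Subset.rfl, hne, hcl, hinv⟩
    exact ⟨M, h1, h2.prop, fun a ha hsub => hsub.antisymm (h2.2 ha hsub)⟩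
  refine ⟨M, hML, hMmem.2.1, hMmem.2.2.1, hMmem.2.2.2, ?_⟩
  intro Y' hY'sub hY'ne hY'cl hY'inv
  exact hMmin Y' ⟨hY'sub.trans hML, hY'ne, hY'cl, hY'inv⟩ hY'sub

lemma exists_omegaLimit [CompactSpace X] (e : X ≃ₜ X) (x : X) :
    ∃ L : Set X, L.Nonempty ∧ IsClosed L ∧ (⇑e) '' L = L ∧
      (∀ F : Set X, IsClosed F → (∀ n, (⇑e)^[n] x ∈ F) → L ⊆ F) ∧
      L ⊆ closure {y | ∃ n, 1 ≤ n ∧ y = (⇑e)^[n] x} := by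
  set SS : ℕ → Set X := fun N => closure {y | ∃ n, N ≤ n ∧ y = (⇑e)^[n] x} with hSS
  have hanti : ∀ N, SS (N + 1) ⊆ SS N := by
    intro N
    refine closure_mono ?_
    rintro y ⟨n, hn, hy⟩
    exact ⟨n, by omega, hy⟩
  have hne : ∀ N, (SS N).Nonempty := fun N => ⟨(⇑e)^[N] x, subset_closure ⟨N, le_rfl, rfl⟩⟩
  have hcl : ∀ N, IsClosed (SS N) := fun N => isClosed_closure
  refine ⟨⋂ N, SS N, ?_, isClosed_iInter hcl, ?_, ?_, ?_⟩
  · exact IsCompact.nonempty_iInter_of_sequence_nonempty_isCompact_isClosed SS hanti hne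
      (hcl 0).isCompact hcl
  · have key : ∀ N, (⇑e) '' SS N = SS (N + 1) := by
      intro N
      have hset : (⇑e) '' {y | ∃ n, N ≤ n ∧ y = (⇑e)^[n] x}
          = {y | ∃ n, N + 1 ≤ n ∧ y = (⇑e)^[n] x} := by
        ext y
        constructor
        · rintro ⟨w, ⟨n, hn, rfl⟩, rfl⟩
          exact ⟨n + 1, by omega, (Function.iterate_succ_apply' _ _ _).symm⟩
        · rintro ⟨n, hn, rfl⟩
          obtain ⟨m, rfl⟩ : ∃ m, n = m + 1 := ⟨n - 1, by omega⟩
          exact ⟨(⇑e)^[m] x, ⟨m, by omega, rfl⟩, (Function.iterate_succ_apply' _ _ _).symm⟩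
      rw [hSS]
      simp only
      rw [e.image_closure, hset]
    rw [Set.image_iInter e.bijective]
    apply subset_antisymm
    · intro y hy
      refine mem_iInter.2 fun N => ?_
      have hN := mem_iInter.1 hy N
      rw [key] at hN
      exact hanti N hN
    · intro y hy
      refine mem_iInter.2 fun N => ?_
      rw [key N]
      exact mem_iInter.1 hy (N + 1)
  · intro F hF hFn y hy
    have h0 : y ∈ SS 0 := mem_iInter.1 hy 0
    have hsub : {y | ∃ n, 0 ≤ n ∧ y = (⇑e)^[n] x} ⊆ F := by
      rintro w ⟨n, -, rfl⟩
      exact hFn n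
    exact closure_minimal hsub hF h0
  · intro y hy
    exact mem_iInter.1 hy 1

variable {Z : Set X} {ψ : X → Z}

lemma psi_iterate (h : X ≃ₜ X) (hW : IsFiberwiseWitness h Z ψ) (n : ℕ) (x : X) :
    ψ ((⇑h)^[n] x) = ψ x := by
  induction n with
  | zero => rfl
  | succ n ih => rw [Function.iterate_succ_apply', hW.comp_h, ih]

lemma psi_symm (h : X ≃ₜ X) (hW : IsFiberwiseWitness h Z ψ) (x : X) :
    ψ ((⇑h.symm) x) = ψ x := by
  have := hW.comp_h (h.symm x)
  rw [h.apply_symm_apply] at this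
  exact this.symm

lemma psi_symm_iterate (h : X ≃ₜ X) (hW : IsFiberwiseWitness h Z ψ) (n : ℕ) (x : X) :
    ψ ((⇑h.symm)^[n] x) = ψ x := by
  induction n with
  | zero => rfl
  | succ n ih => rw [Function.iterate_succ_apply', psi_symm h hW, ih]

lemma orbit_hits [CompactSpace X] [T2Space X] (h : X ≃ₜ X)
    (hW : IsFiberwiseWitness h Z ψ) (e : X ≃ₜ X) (hec : ∀ y, ψ (e y) = ψ y)
    (hei : ∀ C : Set X, (⇑e) '' C = C → (⇑h) '' C = C) (x : X) (U : Set X) (hU : IsOpen U)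
    (hmeet : ∀ M, IsMinimalSetWithin h (ψ ⁻¹' {ψ x}) M → (U ∩ M).Nonempty) :
    ∃ n, 1 ≤ n ∧ (⇑e)^[n] x ∈ U := by
  obtain ⟨L, hLne, hLcl, hLinv, hLsub, hLtail⟩ := exists_omegaLimit e x
  have hpsin : ∀ (n : ℕ) (y : X), ψ ((⇑e)^[n] y) = ψ y := by
    intro n
    induction n with
    | zero => intro y; rfl
    | succ n ih => intro y; rw [Function.iterate_succ_apply', hec, ih]
  have hfib : IsClosed (ψ ⁻¹' {ψ x}) :=
    IsClosed.preimage hW.quotient.continuous isClosed_singleton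
  have hLF : L ⊆ ψ ⁻¹' {ψ x} := hLsub _ hfib fun n => by
    simp only [mem_preimage, mem_singleton_iff, hpsin]
  obtain ⟨M, hML, hMmin⟩ := exists_minimalSet_subset h L hLne hLcl (hei L hLinv)
  obtain ⟨p, hpU, hpM⟩ := hmeet M ⟨hML.trans hLF, hMmin⟩
  have hp : p ∈ closure {y | ∃ n, 1 ≤ n ∧ y = (⇑e)^[n] x} := hLtail (hML hpM)
  rw [mem_closure_iff] at hp
  obtain ⟨y, hyU, n, hn, rfl⟩ := hp U hU hpU
  exact ⟨n, hn, hyU⟩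

end Helpers
/-- Theorem (Statement 15): given candidate bases `B 1, …, B T` (compact open, each inside
an element of the partition `P`), there is a system of finite first return time maps
subordinate to `P` with exactly these bases iff for every `z ∈ Z` precisely one base meets
the fiber `ψ⁻¹(z)`, and that intersection meets the minimal set of the fiber subsystem. -/
theorem exists_returnSystem_with_given_bases_iff
    {X : Type*} [TopologicalSpace X] [CompactSpace X]
    [TopologicalSpace.MetrizableSpace X] [TotallyDisconnectedSpace X] (h : X ≃ₜ X)
    (Z : Set X) (ψ : X → Z) (hW : IsFiberwiseWitness h Z ψ)
    (P : Set (Set X)) (hP : IsPartition P)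
    (T : ℕ) (hT : 0 < T) (B : Fin T → Set X)
    (hBc : ∀ t, IsCompact (B t)) (hBo : ∀ t, IsOpen (B t))
    (hBsub : ∀ t, ∃ U ∈ P, B t ⊆ U) :
    (∃ (K : Fin T → ℕ) (Y : (t : Fin T) → Fin (K t) → Set X)
        (J : (t : Fin T) → Fin (K t) → ℕ),
        IsReturnSystem h P ⟨T, B, K, Y, J⟩) ↔
      ∀ z : Z, ∃ t : Fin T, (B t ∩ ψ ⁻¹' {z}).Nonempty ∧
        (∀ Y, IsMinimalSetWithin h (ψ ⁻¹' {z}) Y → (B t ∩ ψ ⁻¹' {z} ∩ Y).Nonempty) ∧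
        ∀ t', (B t' ∩ ψ ⁻¹' {z}).Nonempty → t' = t := by
  classical
  constructor
  · rintro ⟨K, Yf, Jf, hS⟩ z
    -- basic consequences of the tower structure
    have tw_base : ∀ (x : X) (t : Fin T), x ∈ B t →
        ∃ k j, j < Jf t k ∧ x ∈ (⇑h)^[j] '' Yf t k := by
      intro x t hx
      have hYU : (⋃ k, Yf t k) = B t := hS.Y_iUnion t
      rw [← hYU] at hx
      obtain ⟨k, hk⟩ := mem_iUnion.1 hx
      exact ⟨k, 0, hS.J_pos t k, by simpa using hk⟩
    have tw_step : ∀ (x : X) (t : Fin T),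
        (∃ k j, j < Jf t k ∧ x ∈ (⇑h)^[j] '' Yf t k) →
        ∃ k j, j < Jf t k ∧ h x ∈ (⇑h)^[j] '' Yf t k := by
      rintro x t ⟨k, j, hj, y, hy, rfl⟩
      by_cases hc : j + 1 < Jf t k
      · exact ⟨k, j + 1, hc, y, hy, Function.iterate_succ_apply' (⇑h) j y⟩
      · have hJe : j + 1 = Jf t k := by omega
        have hmem : h ((⇑h)^[j] y) ∈ (⇑h)^[Jf t k] '' Yf t k := by
          rw [← hJe]
          exact ⟨y, hy, Function.iterate_succ_apply' (⇑h) j y⟩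
        have hIU : (⋃ k', (⇑h)^[Jf t k'] '' Yf t k') = B t := hS.image_iUnion t
        have hB : h ((⇑h)^[j] y) ∈ B t := by
          rw [← hIU]; exact mem_iUnion.2 ⟨k, hmem⟩
        exact tw_base _ t hB
    have tw_uniq : ∀ (x : X) (t : Fin T) (k : Fin (K t)) (j : ℕ) (t' : Fin T)
        (k' : Fin (K t')) (j' : ℕ), j < Jf t k → x ∈ (⇑h)^[j] '' Yf t k →
        j' < Jf t' k' → x ∈ (⇑h)^[j'] '' Yf t' k' → t = t' := by
      intro x t k j t' k' j' hj hx hj' hx'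
      obtain ⟨p, -, hpu⟩ := hS.tower x
      have e1 := hpu ⟨t, k, j⟩ ⟨hj, hx⟩
      have e2 := hpu ⟨t', k', j'⟩ ⟨hj', hx'⟩
      exact congrArg Sigma.fst (e1.trans e2.symm)
    have tw_iter : ∀ (x : X) (t : Fin T), x ∈ B t → ∀ n : ℕ,
        ∃ k j, j < Jf t k ∧ (⇑h)^[n] x ∈ (⇑h)^[j] '' Yf t k := by
      intro x t hx n
      induction n with
      | zero => simpa using tw_base x t hx
      | succ n ih =>
        rw [Function.iterate_succ_apply']
        exact tw_step _ t ih
    have lab_eq : ∀ (x : X) (t t' : Fin T) (n : ℕ), x ∈ B t → (⇑h)^[n] x ∈ B t' → t = t' := by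
      intro x t t' n hx hx'
      obtain ⟨k, j, hj, hm⟩ := tw_iter x t hx n
      obtain ⟨k', j', hj', hm'⟩ := tw_base _ t' hx'
      exact tw_uniq ((⇑h)^[n] x) t k j t' k' j' hj hm hj' hm'
    have reach_base : ∀ x : X, ∃ (t : Fin T) (n : ℕ), (⇑h)^[n] x ∈ B t := by
      intro x
      obtain ⟨⟨t, k, j⟩, hp1, -⟩ := hS.tower x
      have hj' : j < Jf t k := hp1.1
      have hxm : x ∈ (⇑h)^[j] '' Yf t k := hp1.2
      obtain ⟨y, hy, hyx⟩ := hxm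
      refine ⟨t, Jf t k - j, ?_⟩
      have h1 : (⇑h)^[Jf t k - j] x = (⇑h)^[Jf t k] y := by
        rw [← hyx, ← Function.iterate_add_apply]
        congr 1
        omega
      have hIU : (⋃ k', (⇑h)^[Jf t k'] '' Yf t k') = B t := hS.image_iUnion t
      rw [h1, ← hIU]
      exact mem_iUnion.2 ⟨k, ⟨y, hy, rfl⟩⟩
    -- the fiber over z
    obtain ⟨Yz, hYzw, hzY, hYzu⟩ := hW.fiber z
    have hzF : (z : X) ∈ ψ ⁻¹' {z} := by
      have hr := hW.restrict_id (z : X) z.2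
      show ψ (z : X) ∈ ({z} : Set Z)
      rw [hr]
      exact rfl
    obtain ⟨t, n, htn⟩ := reach_base (z : X)
    have hYinv : ∀ m : ℕ, (⇑h)^[m] '' Yz = Yz := by
      intro m
      induction m with
      | zero => simp
      | succ m ih => rw [Function.iterate_succ', Set.image_comp, ih, hYzw.2.2.2.1]
    have hwY : (⇑h)^[n] (z : X) ∈ Yz := by
      rw [← hYinv n]
      exact ⟨(z : X), hzY, rfl⟩
    have hwF : (⇑h)^[n] (z : X) ∈ ψ ⁻¹' {z} := hYzw.1 hwY
    refine ⟨t, ⟨(⇑h)^[n] (z : X), htn, hwF⟩, ?_, ?_⟩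
    · intro Y' hY'
      rw [hYzu Y' hY']
      exact ⟨(⇑h)^[n] (z : X), ⟨htn, hwF⟩, hwY⟩
    · intro t' hne'
      obtain ⟨x', hx'B, hx'F⟩ := hne'
      have hx'z : ψ x' = z := hx'F
      have hmeet : ∀ M, IsMinimalSetWithin h (ψ ⁻¹' {ψ x'}) M → (B t ∩ M).Nonempty := by
        intro M hM
        rw [hx'z] at hM
        rw [hYzu M hM]
        exact ⟨(⇑h)^[n] (z : X), htn, hwY⟩
      obtain ⟨m, hm1, hmU⟩ := orbit_hits h hW h (fun y => hW.comp_h y)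
        (fun C hC => hC) x' (B t) (hBo t) hmeet
      exact lab_eq x' t' t m hx'B hmU
  · intro H
    have hmemf : ∀ x : X, x ∈ ψ ⁻¹' {ψ x} := fun x => rfl
    have hdisj : ∀ (x : X) (t t' : Fin T), x ∈ B t → x ∈ B t' → t = t' := by
      intro x t t' hx hx'
      obtain ⟨t0, -, -, huniq⟩ := H (ψ x)
      rw [huniq t ⟨x, hx, hmemf x⟩, huniq t' ⟨x, hx', hmemf x⟩]
    set A := ⋃ t, B t with hA
    have hAo : IsOpen A := isOpen_iUnion hBo
    have hAcl : IsClosed A := (isCompact_iUnion hBc).isClosed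
    have hsame : ∀ (x y : X) (t : Fin T), ψ y = ψ x → x ∈ B t → y ∈ A → y ∈ B t := by
      intro x y t hxy hx hy
      obtain ⟨t', hy'⟩ := mem_iUnion.1 hy
      obtain ⟨t0, -, -, huniq⟩ := H (ψ x)
      have h1 : t' = t0 := huniq t' ⟨y, hy', by
        show ψ y ∈ ({ψ x} : Set Z)
        rw [hxy]
        exact rfl⟩
      have h2 : t = t0 := huniq t ⟨x, hx, hmemf x⟩
      rw [h2, ← h1]
      exact hy'
    have hmeetA : ∀ (x : X) (M : Set X),
        IsMinimalSetWithin h (ψ ⁻¹' {ψ x}) M → (A ∩ M).Nonempty := by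
      intro x M hM
      obtain ⟨t0, -, hmin, -⟩ := H (ψ x)
      obtain ⟨w, ⟨hw1, -⟩, hw2⟩ := hmin M hM
      exact ⟨w, mem_iUnion.2 ⟨t0, hw1⟩, hw2⟩
    have hret0 : ∀ x : X, ∃ n, 1 ≤ n ∧ (⇑h)^[n] x ∈ A :=
      fun x => orbit_hits h hW h (fun y => hW.comp_h y) (fun C hC => hC) x A hAo (hmeetA x)
    have hprev0 : ∀ x : X, ∃ n, 1 ≤ n ∧ (⇑h.symm)^[n] x ∈ A :=
      fun x => orbit_hits h hW h.symm (fun y => psi_symm h hW y)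
        (fun C hC => image_inv_fixed h hC) x A hAo (hmeetA x)
    have hdep0 : ∀ x : X, ∃ n, (⇑h.symm)^[n] x ∈ A :=
      fun x => ⟨(hprev0 x).choose, (hprev0 x).choose_spec.2⟩
    obtain ⟨ret, ret_pos, ret_mem, ret_min⟩ :
        ∃ r : X → ℕ, (∀ x, 1 ≤ r x) ∧ (∀ x, (⇑h)^[r x] x ∈ A) ∧
          (∀ x m, 1 ≤ m → (⇑h)^[m] x ∈ A → r x ≤ m) :=
      ⟨fun x => Nat.find (hret0 x), fun x => (Nat.find_spec (hret0 x)).1,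
        fun x => (Nat.find_spec (hret0 x)).2, fun x m h1 h2 => Nat.find_min' _ ⟨h1, h2⟩⟩
    have ret_not : ∀ (x : X) (m : ℕ), 1 ≤ m → m < ret x → (⇑h)^[m] x ∉ A :=
      fun x m h1 h2 hm => absurd (ret_min x m h1 hm) (by omega)
    obtain ⟨pre, pre_pos, pre_mem, pre_min⟩ :
        ∃ r : X → ℕ, (∀ x, 1 ≤ r x) ∧ (∀ x, (⇑h.symm)^[r x] x ∈ A) ∧
          (∀ x m, 1 ≤ m → (⇑h.symm)^[m] x ∈ A → r x ≤ m) :=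
      ⟨fun x => Nat.find (hprev0 x), fun x => (Nat.find_spec (hprev0 x)).1,
        fun x => (Nat.find_spec (hprev0 x)).2, fun x m h1 h2 => Nat.find_min' _ ⟨h1, h2⟩⟩
    have pre_not : ∀ (x : X) (m : ℕ), 1 ≤ m → m < pre x → (⇑h.symm)^[m] x ∉ A :=
      fun x m h1 h2 hm => absurd (pre_min x m h1 hm) (by omega)
    obtain ⟨dep, dep_mem, dep_min⟩ :
        ∃ d : X → ℕ, (∀ x, (⇑h.symm)^[d x] x ∈ A) ∧
          (∀ x m, (⇑h.symm)^[m] x ∈ A → d x ≤ m) :=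
      ⟨fun x => Nat.find (hdep0 x), fun x => Nat.find_spec (hdep0 x),
        fun x m hm => Nat.find_min' _ hm⟩
    have dep_not : ∀ (x : X) (m : ℕ), m < dep x → (⇑h.symm)^[m] x ∉ A :=
      fun x m h2 hm => absurd (dep_min x m hm) (by omega)
    obtain ⟨N, hN2, hNb⟩ : ∃ N, 2 ≤ N ∧ ∀ x : X, ret x < N := by
      obtain ⟨s, hs⟩ := IsCompact.elim_finite_subcover isCompact_univ
        (fun n : ℕ => {x : X | (⇑h)^[n + 1] x ∈ A})
        (fun n => hAo.preimage (h.continuous.iterate (n + 1)))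
        (fun x _ => mem_iUnion.2 ⟨ret x - 1, by
          show (⇑h)^[ret x - 1 + 1] x ∈ A
          have h1 := ret_pos x
          rw [show ret x - 1 + 1 = ret x by omega]
          exact ret_mem x⟩)
      refine ⟨s.sup id + 2, by omega, fun x => ?_⟩
      obtain ⟨n, hns, hxn⟩ := mem_iUnion₂.1 (hs (mem_univ x))
      have h1 : ret x ≤ n + 1 := ret_min x (n + 1) (by omega) hxn
      have h2 : n ≤ s.sup id := Finset.le_sup (f := id) hns
      omega
    have hretB : ∀ (x : X) (t : Fin T) (n : ℕ), x ∈ B t → (⇑h)^[n] x ∈ A →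
        (⇑h)^[n] x ∈ B t :=
      fun x t n hx hm => hsame x _ t (psi_iterate h hW n x) hx hm
    have hpreB : ∀ (x : X) (t : Fin T) (n : ℕ), x ∈ B t → (⇑h.symm)^[n] x ∈ A →
        (⇑h.symm)^[n] x ∈ B t :=
      fun x t n hx hm => hsame x _ t (psi_symm_iterate h hW n x) hx hm
    have hpull : ∀ x : X, x ∈ A → ret ((⇑h.symm)^[pre x] x) = pre x ∧
        (⇑h)^[pre x] ((⇑h.symm)^[pre x] x) = x := by
      intro x hxA
      have hxy : (⇑h)^[pre x] ((⇑h.symm)^[pre x] x) = x := iter_apply_symm_iter h (pre x) x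
      refine ⟨le_antisymm ?_ ?_, hxy⟩
      · exact ret_min _ (pre x) (pre_pos x) (by rw [hxy]; exact hxA)
      · by_contra hlt
        push_neg at hlt
        have h1 : (⇑h)^[ret ((⇑h.symm)^[pre x] x)] ((⇑h.symm)^[pre x] x) =
            (⇑h.symm)^[pre x - ret ((⇑h.symm)^[pre x] x)] x :=
          iter_of_symm_iter h (by omega) x
        have h2 := ret_pos ((⇑h.symm)^[pre x] x)
        exact pre_not x (pre x - ret ((⇑h.symm)^[pre x] x)) (by omega) (by omega)
          (by rw [← h1]; exact ret_mem _)
    have hpush : ∀ y : X, y ∈ A → pre ((⇑h)^[ret y] y) = ret y := by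
      intro y hyA
      apply le_antisymm
      · apply pre_min _ (ret y) (ret_pos y)
        rw [symm_iter_apply_iter h (ret y) y]
        exact hyA
      · by_contra hlt
        push_neg at hlt
        have h1 : (⇑h.symm)^[pre ((⇑h)^[ret y] y)] ((⇑h)^[ret y] y) =
            (⇑h)^[ret y - pre ((⇑h)^[ret y] y)] y :=
          symm_iter_of_iter h (by omega) y
        have h2 := pre_pos ((⇑h)^[ret y] y)
        exact ret_not y (ret y - pre ((⇑h)^[ret y] y)) (by omega) (by omega)
          (by rw [← h1]; exact pre_mem _)
    have hdepl : ∀ x : X, dep x < ret ((⇑h.symm)^[dep x] x) ∧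
        (⇑h)^[dep x] ((⇑h.symm)^[dep x] x) = x := by
      intro x
      refine ⟨?_, iter_apply_symm_iter h (dep x) x⟩
      by_contra hle
      push_neg at hle
      have h1 : (⇑h)^[ret ((⇑h.symm)^[dep x] x)] ((⇑h.symm)^[dep x] x) =
          (⇑h.symm)^[dep x - ret ((⇑h.symm)^[dep x] x)] x :=
        iter_of_symm_iter h hle x
      have h2 := ret_pos ((⇑h.symm)^[dep x] x)
      exact dep_not x (dep x - ret ((⇑h.symm)^[dep x] x)) (by omega)
        (by rw [← h1]; exact ret_mem _)
    have hdepu : ∀ (x : X) (j : ℕ), (⇑h.symm)^[j] x ∈ A →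
        j < ret ((⇑h.symm)^[j] x) → j = dep x := by
      intro x j hjA hjr
      have h1 : dep x ≤ j := dep_min x j hjA
      by_contra hne'
      have h2 : dep x < j := by omega
      have h3 : (⇑h)^[j - dep x] ((⇑h.symm)^[j] x) = (⇑h.symm)^[j - (j - dep x)] x :=
        iter_of_symm_iter h (by omega) x
      rw [show j - (j - dep x) = dep x by omega] at h3
      exact ret_not ((⇑h.symm)^[j] x) (j - dep x) (by omega) (by omega)
        (by rw [h3]; exact dep_mem x)
    refine ⟨fun _ => N, fun t k => B t ∩ {x : X | ret x = (k : ℕ)},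
      fun _ k => max (k : ℕ) 1, ?_⟩
    have hlev : ∀ k : ℕ, IsOpen {x : X | ret x = k} ∧ IsClosed {x : X | ret x = k} := by
      intro k
      rcases Nat.eq_zero_or_pos k with rfl | hk
      · have he : {x : X | ret x = 0} = ∅ := by
          ext x
          simp only [mem_setOf_eq, mem_empty_iff_false, iff_false]
          have := ret_pos x
          omega
        rw [he]
        exact ⟨isOpen_empty, isClosed_empty⟩
      · have heq : {x : X | ret x = k} =
            {x : X | (⇑h)^[k] x ∈ A} ∩ ⋂ i ∈ Finset.Ico 1 k, {x : X | (⇑h)^[i] x ∈ A}ᶜ := by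
          ext x
          simp only [mem_setOf_eq, mem_inter_iff, mem_iInter, Finset.mem_Ico, mem_compl_iff]
          constructor
          · intro hx
            refine ⟨by rw [← hx]; exact ret_mem x, ?_⟩
            rintro i ⟨hi1, hik⟩
            exact ret_not x i hi1 (by omega)
          · rintro ⟨h1, h2⟩
            have hle : ret x ≤ k := ret_min x k hk h1
            by_contra hne'
            exact h2 (ret x) ⟨ret_pos x, by omega⟩ (ret_mem x)
        constructor
        · rw [heq]
          refine IsOpen.inter (hAo.preimage (h.continuous.iterate k)) ?_
          refine isOpen_biInter_finset fun i _ => ?_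
          exact (hAcl.preimage (h.continuous.iterate i)).isOpen_compl
        · rw [heq]
          refine IsClosed.inter (hAcl.preimage (h.continuous.iterate k)) ?_
          refine isClosed_biInter fun i _ => ?_
          exact (hAo.preimage (h.continuous.iterate i)).isClosed_compl
    refine { T_pos := hT, base_isCompact := hBc, base_isOpen := hBo, base_subset := hBsub,
             K_pos := fun _ => by show 0 < N; omega,
             Y_isCompact := fun t k => (hBc t).inter_right (hlev (k : ℕ)).2,
             Y_isOpen := fun t k => (hBo t).inter (hlev (k : ℕ)).1,
             Y_disjoint := ?_, Y_iUnion := ?_,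
             J_pos := fun _ k => lt_max_iff.mpr (Or.inr Nat.one_pos),
             returnTime := ?_, image_disjoint := ?_, image_iUnion := ?_, tower := ?_ }
    · -- Y_disjoint
      intro t k k' hkk'
      rw [Set.disjoint_left]
      rintro x ⟨-, hx⟩ ⟨-, hx'⟩
      have hx1 : ret x = (k : ℕ) := hx
      have hx2 : ret x = (k' : ℕ) := hx'
      exact hkk' (Fin.ext (hx1.symm.trans hx2))
    · -- Y_iUnion
      intro t
      apply subset_antisymm
      · exact iUnion_subset fun k => inter_subset_left
      · intro x hx
        exact mem_iUnion.2 ⟨⟨ret x, hNb x⟩, hx, rfl⟩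
    · -- returnTime
      intro t k x hx
      obtain ⟨hxB, hxr⟩ := hx
      have hxr' : ret x = (k : ℕ) := hxr
      have hk1 : 1 ≤ (k : ℕ) := by rw [← hxr']; exact ret_pos x
      show firstReturnTime h (B t) x = ((max (k : ℕ) 1 : ℕ) : ℕ∞)
      rw [max_eq_left hk1]
      unfold firstReturnTime
      apply le_antisymm
      · apply sInf_le
        refine ⟨(k : ℕ), ⟨by omega, ?_⟩, rfl⟩
        rw [← hxr']
        exact hretB x t (ret x) hxB (ret_mem x)
      · apply le_sInf
        rintro b ⟨m, ⟨hm0, hmB⟩, rfl⟩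
        have hrm : ret x ≤ m := ret_min x m (by omega) (mem_iUnion.2 ⟨t, hmB⟩)
        have hkm : (k : ℕ) ≤ m := by omega
        show ((k : ℕ) : ℕ∞) ≤ ((m : ℕ) : ℕ∞)
        exact_mod_cast hkm
    · -- image_disjoint
      intro t k k' hkk'
      rw [Set.disjoint_left]
      rintro x ⟨y, ⟨hyB, hyr⟩, rfl⟩ ⟨y', ⟨hy'B, hy'r⟩, hx'⟩
      have hyr' : ret y = (k : ℕ) := hyr
      have hy'r' : ret y' = (k' : ℕ) := hy'r
      have hk1 : 1 ≤ (k : ℕ) := by rw [← hyr']; exact ret_pos y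
      have hk'1 : 1 ≤ (k' : ℕ) := by rw [← hy'r']; exact ret_pos y'
      have hyA : y ∈ A := mem_iUnion.2 ⟨t, hyB⟩
      have hy'A : y' ∈ A := mem_iUnion.2 ⟨t, hy'B⟩
      have e1 : (⇑h)^[max (k : ℕ) 1] y = (⇑h)^[ret y] y := by rw [max_eq_left hk1, hyr']
      have e2 : (⇑h)^[max (k' : ℕ) 1] y' = (⇑h)^[ret y'] y' := by rw [max_eq_left hk'1, hy'r']
      have p1 : pre ((⇑h)^[max (k : ℕ) 1] y) = (k : ℕ) := by
        rw [e1, hpush y hyA, hyr']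
      have p2 : pre ((⇑h)^[max (k' : ℕ) 1] y') = (k' : ℕ) := by
        rw [e2, hpush y' hy'A, hy'r']
      have hx'' : (⇑h)^[max (k' : ℕ) 1] y' = (⇑h)^[max (k : ℕ) 1] y := hx'
      rw [hx''] at p2
      exact hkk' (Fin.ext (p1.symm.trans p2))
    · -- image_iUnion
      intro t
      apply subset_antisymm
      · refine iUnion_subset fun k => ?_
        rintro x ⟨y, ⟨hyB, hyr⟩, rfl⟩
        have hyr' : ret y = (k : ℕ) := hyr
        have hk1 : 1 ≤ (k : ℕ) := by rw [← hyr']; exact ret_pos y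
        show (⇑h)^[max (k : ℕ) 1] y ∈ B t
        rw [max_eq_left hk1, ← hyr']
        exact hretB y t (ret y) hyB (ret_mem y)
      · intro x hxB
        have hxA : x ∈ A := mem_iUnion.2 ⟨t, hxB⟩
        obtain ⟨hr, hx⟩ := hpull x hxA
        have hyB : (⇑h.symm)^[pre x] x ∈ B t := hpreB x t (pre x) hxB (pre_mem x)
        have hmN : pre x < N := by
          have := hNb ((⇑h.symm)^[pre x] x)
          omega
        refine mem_iUnion.2 ⟨⟨pre x, hmN⟩, ⟨(⇑h.symm)^[pre x] x, ⟨hyB, hr⟩, ?_⟩⟩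
        show (⇑h)^[max ((⟨pre x, hmN⟩ : Fin N) : ℕ) 1] ((⇑h.symm)^[pre x] x) = x
        rw [max_eq_left (pre_pos x)]
        exact hx
    · -- tower
      intro x
      have hyA : (⇑h.symm)^[dep x] x ∈ A := dep_mem x
      obtain ⟨t, hyB⟩ := mem_iUnion.1 hyA
      obtain ⟨hmr, hmx⟩ := hdepl x
      refine ⟨⟨t, ⟨ret ((⇑h.symm)^[dep x] x), hNb _⟩, dep x⟩, ⟨?_, ?_⟩, ?_⟩
      · show dep x < max (ret ((⇑h.symm)^[dep x] x)) 1
        exact lt_max_iff.mpr (Or.inl hmr)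
      · exact ⟨(⇑h.symm)^[dep x] x, ⟨hyB, rfl⟩, hmx⟩
      · rintro ⟨t', k', j'⟩ ⟨hj', y', ⟨hy'B, hy'r⟩, hy'x⟩
        have hy'r' : ret y' = (k' : ℕ) := hy'r
        have hk'1 : 1 ≤ (k' : ℕ) := by rw [← hy'r']; exact ret_pos y'
        have hj'' : j' < max (k' : ℕ) 1 := hj'
        rw [max_eq_left hk'1] at hj''
        have hy'A : y' ∈ A := mem_iUnion.2 ⟨t', hy'B⟩
        have hy'x' : (⇑h)^[j'] y' = x := hy'x
        have hy'eq : (⇑h.symm)^[j'] x = y' := by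
          rw [← hy'x', symm_iter_apply_iter]
        have hdj : j' = dep x := hdepu x j' (by rw [hy'eq]; exact hy'A)
          (by rw [hy'eq, hy'r']; exact hj'')
        have hyy : y' = (⇑h.symm)^[dep x] x := by rw [← hy'eq, hdj]
        have htt : t' = t := hdisj y' t' t hy'B (by rw [hyy]; exact hyB)
        subst htt
        have hkk : k' = (⟨ret ((⇑h.symm)^[dep x] x), hNb _⟩ : Fin N) := by
          apply Fin.ext
          show (k' : ℕ) = ret ((⇑h.symm)^[dep x] x)
          rw [← hy'r', hyy]
        subst hkk
        subst hdj
        rfl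
end
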